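/- arXiv:2301.08445 — 7 statements merged into one kernel-verified Lean document; each statement's English description precedes it below -/
import Mathlib

section
/- Let T, τ, J, 𝕄 be natural numbers with τ ≥ 1, J ≥ 1 and 𝕄 ≤ T. Suppose 0 = t_0 < t_1 < ⋯ < t_J = T are integers such that t_{j+1} − t_j ≤ τ for every 0 ≤ j ≤ J−1, and the set of indices j with 0 ≤ j ≤ J−2 and t_{j+1} − t_j < τ has cardinality at most 𝕄. Then J ≤ ⌈(T − 𝕄)/τ⌉ + 𝕄. -/
/-- Bound on the number of batches: the horizon {0,…,T} is split into J episodes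
of length at most τ, all but the last have full length τ except at most 𝕄
early-terminated ones; then J ≤ ⌈(T−𝕄)/τ⌉ + 𝕄. -/
theorem batch_count_bound (T τ J 𝕄 : ℕ) (hτ : 1 ≤ τ) (hJ : 1 ≤ J) (h𝕄T : 𝕄 ≤ T)
    (t : ℕ → ℕ) (ht0 : t 0 = 0) (htJ : t J = T)
    (hmono : ∀ j, j < J → t j < t (j + 1))
    (hlen : ∀ j, j < J → t (j + 1) - t j ≤ τ)
    (hcard : ((Finset.range (J - 1)).filter (fun j => t (j + 1) - t j < τ)).card ≤ 𝕄) :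
    J ≤ (T - 𝕄 + τ - 1) / τ + 𝕄 := by
  obtain ⟨J', rfl⟩ : ∃ J', J = J' + 1 := ⟨J - 1, by omega⟩
  simp only [Nat.add_sub_cancel] at hcard
  -- telescoping sum
  have tele : ∀ n, n ≤ J' + 1 → ∑ j ∈ Finset.range n, (t (j + 1) - t j) = t n := by
    intro n hn
    induction n with
    | zero => simp [ht0]
    | succ m ih =>
      rw [Finset.sum_range_succ, ih (by omega)]
      have := hmono m (by omega)
      omega
  have hsum : ∑ j ∈ Finset.range J', (t (j + 1) - t j) + (t (J' + 1) - t J') = T := by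
    have := tele (J' + 1) le_rfl
    rw [Finset.sum_range_succ] at this
    rw [this, htJ]
  have hlast : 1 ≤ t (J' + 1) - t J' := by
    have := hmono J' (by omega)
    omega
  set F := (Finset.range J').filter (fun j => t (j + 1) - t j < τ) with hF
  set G := (Finset.range J').filter (fun j => ¬ t (j + 1) - t j < τ) with hG
  have hsplit : ∑ j ∈ F, (t (j + 1) - t j) + ∑ j ∈ G, (t (j + 1) - t j)
      = ∑ j ∈ Finset.range J', (t (j + 1) - t j) :=
    Finset.sum_filter_add_sum_filter_not _ _ _
  have hcardsplit : F.card + G.card = J' := by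
    have := Finset.card_filter_add_card_filter_not
      (s := Finset.range J') (p := fun j => t (j + 1) - t j < τ)
    rw [hF, hG]
    simpa only [Finset.card_range] using this
  have hFsum : F.card ≤ ∑ j ∈ F, (t (j + 1) - t j) := by
    calc F.card = ∑ _j ∈ F, 1 := by simp
    _ ≤ _ := by
      apply Finset.sum_le_sum
      intro j hj
      have hjr : j < J' := Finset.mem_range.mp (Finset.mem_filter.mp hj).1
      have := hmono j (by omega)
      omega
  have hGsum : G.card * τ ≤ ∑ j ∈ G, (t (j + 1) - t j) := by
    calc G.card * τ = ∑ _j ∈ G, τ := by simp [mul_comm]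
    _ ≤ _ := by
      apply Finset.sum_le_sum
      intro j hj
      have := (Finset.mem_filter.mp hj).2
      omega
  -- main inequality
  rcases Nat.lt_or_ge J' 𝕄 with hc | hc
  · exact le_trans hc (Nat.le_add_left _ _)
  -- J' ≥ 𝕄
  set k := J' - 𝕄 with hk
  set m := F.card with hm
  set e := 𝕄 - m with he
  have hgk : G.card = k + e := by omega
  have hprod : G.card * τ = k * τ + e * τ := by rw [hgk]; ring
  have heτ : e ≤ e * τ := Nat.le_mul_of_pos_right e (by omega)
  have hT : k * τ + 𝕄 + 1 ≤ T := by omega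
  have hdiv : k + 1 ≤ (T - 𝕄 + τ - 1) / τ := by
    rw [Nat.le_div_iff_mul_le (by omega)]
    have h1 : (k + 1) * τ = k * τ + τ := by ring
    omega
  omega
end

section
/- Let L_f ≥ 1, L_π ≥ 1, κ ≥ 1, β ≥ 0, w_max ≥ 0, π̄0 ≥ 0 and 0 < ρ < 1. Let f : ℝ^n × ℝ^m × ℝ^n → ℝ^n satisfy ‖f(x,u,w) − f(x',u',w')‖ ≤ L_f(‖x−x'‖ + ‖u−u'‖ + ‖w−w'‖) for all arguments and f(0,0,0) = 0, and let π : ℝ^n → ℝ^m be L_π-Lipschitz with ‖π(0)‖ ≤ π̄0. Let s < e be natural numbers and x : ℕ → ℝ^n, w : ℕ → ℝ^n be sequences with ‖w_t‖ ≤ w_max for all t, x_e = f(x_{e−1}, π(x_{e−1}), w_{e−1}), and ‖x_t‖ ≤ κ ρ^{t−s}‖x_s‖ + β w_max for all t with s < t ≤ e−1. Then (i) ‖x_e‖ ≤ L_f(1+L_π) κ ρ^{e−1−s} ‖x_s‖ + L_f((1+L_π)β w_max + w_max + π̄0); (ii) ‖x_e‖² ≤ 2 L_f²(1+L_π)² κ²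 ρ^{2(e−1−s)} ‖x_s‖² + 2 L_f²((1+L_π)β w_max + w_max + π̄0)²; (iii) ‖x_e‖⁴ ≤ 8 L_f⁴(1+L_π)⁴ κ⁴ ρ^{4(e−1−s)} ‖x_s‖⁴ + 8 L_f⁴((1+L_π)β w_max + w_max + π̄0)⁴. -/
open Finset

/-- Bound on the state reached at the end of an early-terminated ('Break') episode:
the E-ISS certificate held up to time `e-1`, and the last step is only controlled
by the Lipschitz constants of the dynamics and the (possibly destabilizing) policy. -/
theorem break_state_bound (n m : ℕ) (Lf Lπ κ β wmax pibar0 ρ : ℝ)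
    (hLf : 1 ≤ Lf) (hLπ : 1 ≤ Lπ) (hκ : 1 ≤ κ) (hβ : 0 ≤ β) (hw : 0 ≤ wmax)
    (hpibar0 : 0 ≤ pibar0) (hρ0 : 0 < ρ) (hρ1 : ρ < 1)
    (f : EuclideanSpace ℝ (Fin n) → EuclideanSpace ℝ (Fin m) → EuclideanSpace ℝ (Fin n)
          → EuclideanSpace ℝ (Fin n))
    (hf : ∀ x u w x' u' w', ‖f x u w - f x' u' w'‖ ≤ Lf * (‖x - x'‖ + ‖u - u'‖ + ‖w - w'‖))
    (hf0 : f 0 0 0 = 0)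
    (π : EuclideanSpace ℝ (Fin n) → EuclideanSpace ℝ (Fin m))
    (hπ : ∀ x y, ‖π x - π y‖ ≤ Lπ * ‖x - y‖) (hπ0 : ‖π 0‖ ≤ pibar0)
    (s e : ℕ) (hse : s < e)
    (x : ℕ → EuclideanSpace ℝ (Fin n)) (w : ℕ → EuclideanSpace ℝ (Fin n))
    (hwb : ∀ t, ‖w t‖ ≤ wmax)
    (hdyn : x e = f (x (e - 1)) (π (x (e - 1))) (w (e - 1)))
    (hcert : ∀ t, s < t → t ≤ e - 1 → ‖x t‖ ≤ κ * ρ ^ (t - s) * ‖x s‖ + β * wmax) :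
    ‖x e‖ ≤ Lf * (1 + Lπ) * κ * ρ ^ (e - 1 - s) * ‖x s‖
        + Lf * ((1 + Lπ) * β * wmax + wmax + pibar0) ∧
    ‖x e‖ ^ 2 ≤ 2 * Lf ^ 2 * (1 + Lπ) ^ 2 * κ ^ 2 * ρ ^ (2 * (e - 1 - s)) * ‖x s‖ ^ 2
        + 2 * Lf ^ 2 * ((1 + Lπ) * β * wmax + wmax + pibar0) ^ 2 ∧
    ‖x e‖ ^ 4 ≤ 8 * Lf ^ 4 * (1 + Lπ) ^ 4 * κ ^ 4 * ρ ^ (4 * (e - 1 - s)) * ‖x s‖ ^ 4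
        + 8 * Lf ^ 4 * ((1 + Lπ) * β * wmax + wmax + pibar0) ^ 4 := by
  have hLf0 : (0:ℝ) ≤ Lf := le_trans zero_le_one hLf
  have hLπ0 : (0:ℝ) ≤ Lπ := le_trans zero_le_one hLπ
  have hκ0 : (0:ℝ) ≤ κ := le_trans zero_le_one hκ
  have hρk : (0:ℝ) ≤ ρ ^ (e - 1 - s) := le_of_lt (pow_pos hρ0 _)
  -- bound on ‖x (e-1)‖
  have hX : ‖x (e - 1)‖ ≤ κ * ρ ^ (e - 1 - s) * ‖x s‖ + β * wmax := by
    rcases eq_or_lt_of_le (Nat.succ_le_of_lt hse) with h | h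
    · have hes : e - 1 = s := by omega
      rw [hes]
      have : (s - s) = 0 := Nat.sub_self s
      rw [this, pow_zero]
      nlinarith [norm_nonneg (x s)]
    · exact hcert (e - 1) (by omega) le_rfl
  -- bound on ‖π (x (e-1))‖
  have hπx : ‖π (x (e - 1))‖ ≤ Lπ * ‖x (e - 1)‖ + pibar0 := by
    have := hπ (x (e - 1)) 0
    simp only [sub_zero] at this
    calc ‖π (x (e - 1))‖ = ‖π (x (e - 1)) - π 0 + π 0‖ := by rw [sub_add_cancel]
      _ ≤ ‖π (x (e - 1)) - π 0‖ + ‖π 0‖ := norm_add_le _ _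
      _ ≤ Lπ * ‖x (e - 1)‖ + pibar0 := add_le_add this hπ0
  have hxe : ‖x e‖ ≤ Lf * (‖x (e - 1)‖ + ‖π (x (e - 1))‖ + ‖w (e - 1)‖) := by
    have := hf (x (e - 1)) (π (x (e - 1))) (w (e - 1)) 0 0 0
    rw [hf0] at this
    simpa [hdyn] using this
  set A := Lf * (1 + Lπ) * κ * ρ ^ (e - 1 - s) * ‖x s‖ with hA
  set B := Lf * ((1 + Lπ) * β * wmax + wmax + pibar0) with hB
  have hA0 : 0 ≤ A := by
    apply mul_nonneg; apply mul_nonneg; apply mul_nonneg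
    exact mul_nonneg hLf0 (by linarith)
    exact hκ0; exact hρk; exact norm_nonneg _
  have hB0 : 0 ≤ B := by
    apply mul_nonneg hLf0
    have : 0 ≤ (1 + Lπ) * β * wmax := mul_nonneg (mul_nonneg (by linarith) hβ) hw
    linarith
  have h1 : ‖x e‖ ≤ A + B := by
    have hwe := hwb (e - 1)
    have hX0 : (0:ℝ) ≤ ‖x (e-1)‖ := norm_nonneg _
    calc ‖x e‖ ≤ Lf * (‖x (e - 1)‖ + ‖π (x (e - 1))‖ + ‖w (e - 1)‖) := hxe
      _ ≤ Lf * (‖x (e - 1)‖ + (Lπ * ‖x (e - 1)‖ + pibar0) + wmax) := by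
          apply mul_le_mul_of_nonneg_left _ hLf0
          linarith
      _ = Lf * ((1 + Lπ) * ‖x (e - 1)‖ + pibar0 + wmax) := by ring
      _ ≤ Lf * ((1 + Lπ) * (κ * ρ ^ (e - 1 - s) * ‖x s‖ + β * wmax) + pibar0 + wmax) := by
          apply mul_le_mul_of_nonneg_left _ hLf0
          have := mul_le_mul_of_nonneg_left hX (show (0:ℝ) ≤ 1 + Lπ by linarith)
          linarith
      _ = A + B := by rw [hA, hB]; ring
  have hx0 : (0:ℝ) ≤ ‖x e‖ := norm_nonneg _
  refine ⟨h1, ?_, ?_⟩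
  · have hrw : ρ ^ (2 * (e - 1 - s)) = (ρ ^ (e - 1 - s)) ^ 2 := by
      rw [mul_comm, pow_mul]
    rw [hrw]
    have h2 : ‖x e‖ ^ 2 ≤ (A + B) ^ 2 := pow_le_pow_left₀ hx0 h1 2
    have hid : (A + B) ^ 2 + (A - B) ^ 2 = 2 * A ^ 2 + 2 * B ^ 2 := by ring
    calc ‖x e‖ ^ 2 ≤ 2 * A ^ 2 + 2 * B ^ 2 := by
          have := sq_nonneg (A - B); linarith
      _ = 2 * Lf ^ 2 * (1 + Lπ) ^ 2 * κ ^ 2 * (ρ ^ (e - 1 - s)) ^ 2 * ‖x s‖ ^ 2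
        + 2 * Lf ^ 2 * ((1 + Lπ) * β * wmax + wmax + pibar0) ^ 2 := by rw [hA, hB]; ring
  · have hrw : ρ ^ (4 * (e - 1 - s)) = (ρ ^ (e - 1 - s)) ^ 4 := by
      rw [mul_comm, pow_mul]
    rw [hrw]
    have h2 : ‖x e‖ ^ 2 ≤ 2 * A ^ 2 + 2 * B ^ 2 := by
      have hsq : ‖x e‖ ^ 2 ≤ (A + B) ^ 2 := pow_le_pow_left₀ hx0 h1 2
      have hid : (A + B) ^ 2 + (A - B) ^ 2 = 2 * A ^ 2 + 2 * B ^ 2 := by ring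
      have := sq_nonneg (A - B); linarith
    have hs2 : (0:ℝ) ≤ ‖x e‖ ^ 2 := sq_nonneg _
    have h4 : ‖x e‖ ^ 4 ≤ (2 * A ^ 2 + 2 * B ^ 2) ^ 2 := by
      have heq : ‖x e‖ ^ 4 = (‖x e‖ ^ 2) ^ 2 := by ring
      rw [heq]
      exact pow_le_pow_left₀ hs2 h2 2
    have h8 : (2 * A ^ 2 + 2 * B ^ 2) ^ 2 ≤ 8 * A ^ 4 + 8 * B ^ 4 := by
      have hid : (2 * A ^ 2 + 2 * B ^ 2) ^ 2 + 4 * (A ^ 2 - B ^ 2) ^ 2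
          = 8 * A ^ 4 + 8 * B ^ 4 := by ring
      have := sq_nonneg (A ^ 2 - B ^ 2); linarith
    calc ‖x e‖ ^ 4 ≤ 8 * A ^ 4 + 8 * B ^ 4 := by linarith
      _ = 8 * Lf ^ 4 * (1 + Lπ) ^ 4 * κ ^ 4 * (ρ ^ (e - 1 - s)) ^ 4 * ‖x s‖ ^ 4
        + 8 * Lf ^ 4 * ((1 + Lπ) * β * wmax + wmax + pibar0) ^ 4 := by rw [hA, hB]; ring
end

section
/- Let κ ≥ 1, L_f ≥ 1, L_π ≥ 1, 0 < ρ < 1, β ≥ 0, w_max ≥ 0, π̄0 ≥ 0, and an integer τ ≥ 1 with 2γ0² < 1 where γ0 := 2κ²ρ^{2τ}; set γ1 := 2L_f²(1+L_π)²κ², c := L_f((1+L_π)β w_max + w_max + π̄0), α8 := √(γ1/2)·β w_max/(1−κρ^τ) + c, and α9 := 2γ1 β² w_max²/(1−γ0) + 2c². Let p < q be natural numbers and y : ℕ → ℝ with y_j ≥ 0 for all j, y_{j+1} ≤ κρ^τ y_j + β w_max for all j with p ≤ j ≤ q−2, and y_q ≤ √(γ1/2)·y_{q−1} + c. Then y_q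 ≤ √(γ1/2)·(κρ^τ)^{q−1−p} y_p + α8 and y_q² ≤ γ1·γ0^{q−1−p} y_p² + α9. -/
lemma sq_expand_aux (x u z : ℝ) : (x * u + z) ^ 2 ≤ 2 * x ^ 2 * u ^ 2 + 2 * z ^ 2 := by
  nlinarith [sq_nonneg (x * u - z)]

lemma geom_iter (a b : ℝ) (ha0 : 0 ≤ a) (ha1 : a < 1) (hb : 0 ≤ b)
    (p q : ℕ) (z : ℕ → ℝ)
    (hrec : ∀ j, p ≤ j → j + 2 ≤ q → z (j + 1) ≤ a * z j + b) :
    ∀ n, p + n + 1 ≤ q → z (p + n) ≤ a ^ n * z p + b / (1 - a) := by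
  have h1a : 0 < 1 - a := by linarith
  intro n
  induction n with
  | zero =>
    intro _
    have : 0 ≤ b / (1 - a) := div_nonneg hb (le_of_lt h1a)
    simpa using by linarith
  | succ n ih =>
    intro hn
    have ihh := ih (by omega)
    have hr := hrec (p + n) (by omega) (by omega)
    have key : a * z (p + n) ≤ a * (a ^ n * z p + b / (1 - a)) :=
      mul_le_mul_of_nonneg_left ihh ha0
    have hfix : a * (b / (1 - a)) + b = b / (1 - a) := by
      field_simp
      ring
    have : z (p + n + 1) ≤ a ^ (n + 1) * z p + b / (1 - a) := by
      calc z (p + n + 1) ≤ a * z (p + n) + b := hr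
        _ ≤ a * (a ^ n * z p + b / (1 - a)) + b := by linarith
        _ = a ^ (n + 1) * z p + (a * (b / (1 - a)) + b) := by ring
        _ = a ^ (n + 1) * z p + b / (1 - a) := by rw [hfix]
    simpa [add_assoc] using this

/-- Relation of episode-start state norms at two consecutive Break activations:
between the Breaks every episode satisfies the E-ISS recursion, and the final
Break step is only controlled by the Lipschitz constants. -/
theorem consecutive_breaks_bound (κ Lf Lπ ρ β wmax pibar0 γ0 γ1 c α8 α9 : ℝ)
    (τ : ℕ) (hκ : 1 ≤ κ) (hLf : 1 ≤ Lf) (hLπ : 1 ≤ Lπ) (hρ0 : 0 < ρ) (hρ1 : ρ < 1)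
    (hβ : 0 ≤ β) (hw : 0 ≤ wmax) (hpibar0 : 0 ≤ pibar0) (hτ : 1 ≤ τ)
    (hγ0 : γ0 = 2 * κ ^ 2 * ρ ^ (2 * τ)) (hsmall : 2 * γ0 ^ 2 < 1)
    (hγ1 : γ1 = 2 * Lf ^ 2 * (1 + Lπ) ^ 2 * κ ^ 2)
    (hc : c = Lf * ((1 + Lπ) * β * wmax + wmax + pibar0))
    (hα8 : α8 = Real.sqrt (γ1 / 2) * (β * wmax) / (1 - κ * ρ ^ τ) + c)
    (hα9 : α9 = 2 * γ1 * β ^ 2 * wmax ^ 2 / (1 - γ0) + 2 * c ^ 2)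
    (p q : ℕ) (hpq : p < q) (y : ℕ → ℝ) (hy : ∀ j, 0 ≤ y j)
    (hrec : ∀ j, p ≤ j → j + 2 ≤ q → y (j + 1) ≤ κ * ρ ^ τ * y j + β * wmax)
    (hbreak : y q ≤ Real.sqrt (γ1 / 2) * y (q - 1) + c) :
    y q ≤ Real.sqrt (γ1 / 2) * (κ * ρ ^ τ) ^ (q - 1 - p) * y p + α8 ∧
    y q ^ 2 ≤ γ1 * γ0 ^ (q - 1 - p) * y p ^ 2 + α9 := by
  set a : ℝ := κ * ρ ^ τ with ha
  set b : ℝ := β * wmax with hb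
  have ha0 : 0 ≤ a := by positivity
  have hb0 : 0 ≤ b := by positivity
  have hγ0nn : 0 ≤ γ0 := by rw [hγ0]; positivity
  have hγ0lt : γ0 < 1 := by nlinarith
  have hasq : a ^ 2 = γ0 / 2 := by
    rw [hγ0, ha]; rw [two_mul τ, pow_add]; ring
  have ha1 : a < 1 := by nlinarith
  have hγ1nn : 0 ≤ γ1 / 2 := by rw [hγ1]; positivity
  have hs0 : 0 ≤ Real.sqrt (γ1 / 2) := Real.sqrt_nonneg _
  have hssq : Real.sqrt (γ1 / 2) ^ 2 = γ1 / 2 := Real.sq_sqrt hγ1nn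
  have hcnn : 0 ≤ c := by
    rw [hc]; positivity
  set m : ℕ := q - 1 - p with hm
  have hpm : p + m = q - 1 := by omega
  have hpm1 : p + m + 1 ≤ q := by omega
  -- first bound
  have h1 := geom_iter a b ha0 ha1 hb0 p q y hrec m hpm1
  rw [hpm] at h1
  have hq1 : y q ≤ Real.sqrt (γ1 / 2) * (a ^ m * y p + b / (1 - a)) + c := by
    calc y q ≤ Real.sqrt (γ1 / 2) * y (q - 1) + c := hbreak
      _ ≤ Real.sqrt (γ1 / 2) * (a ^ m * y p + b / (1 - a)) + c := by
          have := mul_le_mul_of_nonneg_left h1 hs0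
          linarith
  have part1 : y q ≤ Real.sqrt (γ1 / 2) * a ^ m * y p + α8 := by
    rw [hα8]
    have heq : Real.sqrt (γ1 / 2) * (a ^ m * y p + b / (1 - a)) + c
        = Real.sqrt (γ1 / 2) * a ^ m * y p
          + (Real.sqrt (γ1 / 2) * (β * wmax) / (1 - a) + c) := by
      rw [hb, mul_div_assoc]; ring
    linarith [hq1, heq.le]
  -- second bound
  have hrec2 : ∀ j, p ≤ j → j + 2 ≤ q →
      (fun k => y k ^ 2) (j + 1) ≤ γ0 * (fun k => y k ^ 2) j + 2 * b ^ 2 := by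
    intro j hj1 hj2
    have hr := hrec j hj1 hj2
    have h0 : 0 ≤ y (j + 1) := hy _
    have hyj : 0 ≤ y j := hy _
    have hsq : y (j + 1) ^ 2 ≤ (a * y j + b) ^ 2 := pow_le_pow_left₀ h0 hr 2
    have h2 : (a * y j + b) ^ 2 ≤ 2 * a ^ 2 * y j ^ 2 + 2 * b ^ 2 := sq_expand_aux a (y j) b
    have h3 : 2 * a ^ 2 = γ0 := by rw [hasq]; ring
    show y (j + 1) ^ 2 ≤ γ0 * y j ^ 2 + 2 * b ^ 2
    rw [← h3]
    linarith
  have h2 := geom_iter γ0 (2 * b ^ 2) hγ0nn hγ0lt (by positivity) p q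
    (fun k => y k ^ 2) hrec2 m hpm1
  rw [hpm] at h2
  have hyq2 : y q ^ 2 ≤ (Real.sqrt (γ1 / 2) * y (q - 1) + c) ^ 2 :=
    pow_le_pow_left₀ (hy q) hbreak 2
  have hexp : (Real.sqrt (γ1 / 2) * y (q - 1) + c) ^ 2
      ≤ γ1 * y (q - 1) ^ 2 + 2 * c ^ 2 := by
    have h := sq_expand_aux (Real.sqrt (γ1 / 2)) (y (q - 1)) c
    rw [hssq] at h
    have he : 2 * (γ1 / 2) * y (q - 1) ^ 2 = γ1 * y (q - 1) ^ 2 := by ring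
    linarith
  have part2 : y q ^ 2 ≤ γ1 * γ0 ^ m * y p ^ 2 + α9 := by
    rw [hα9]
    have hγ1nn' : 0 ≤ γ1 := by linarith
    have hmul := mul_le_mul_of_nonneg_left h2 hγ1nn'
    have hid : γ1 * (γ0 ^ m * y p ^ 2 + 2 * b ^ 2 / (1 - γ0))
        = γ1 * γ0 ^ m * y p ^ 2 + 2 * γ1 * β ^ 2 * wmax ^ 2 / (1 - γ0) := by
      rw [hb, mul_div_assoc]; ring
    rw [hid] at hmul
    linarith
  exact ⟨part1, part2⟩
end

section
/- Let κ ≥ 1, L_f ≥ 1, L_π ≥ 1, 0 < ρ < 1, β ≥ 0, w_max ≥ 0, π̄0 ≥ 0, and an integer τ ≥ 1 with 2γ0² < 1 where γ0 := 2κ²ρ^{2τ}; set γ1 := 2L_f²(1+L_π)²κ² (so √(γ1/2) = L_f(1+L_π)κ > 1), c := L_f((1+L_π)β w_max + w_max + π̄0), and α8 := √(γ1/2)·β w_max/(1−κρ^τ) + c. Let J ≥ 1 and 𝕄 be natural numbers, let y : ℕ → ℝ satisfy y_j ≥ 0 for all j, and let B ⊆ {1,…,J−1} be a set with |B| ≤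 𝕄 such that for every j with 0 ≤ j ≤ J−2: if j+1 ∈ B then y_{j+1} ≤ √(γ1/2)·y_j + c, and otherwise y_{j+1} ≤ κρ^τ y_j + β w_max. Then Σ_{j=0}^{J−1} y_j ≤ (1/(1−κρ^τ)) · ((√(γ1/2))^{𝕄+1} − 1)/(√(γ1/2) − 1) · (y_0 + α8/(√(γ1/2) − 1)) + β w_max · J/(1−κρ^τ). -/
/-- Auxiliary induction: bound on `(1-r) * ∑ y` for the switching recursion. -/
lemma sum_episode_starts_aux (r g a b c w : ℝ) (J : ℕ) (hJ : 1 ≤ J)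
    (y : ℕ → ℝ) (hy : ∀ j, 0 ≤ y j)
    (B : Finset ℕ) (hB : B ⊆ Finset.Icc 1 (J - 1))
    (hr0 : 0 ≤ r) (hr1 : r < 1) (hg : 2 ≤ g) (ha0 : 0 ≤ a) (hb0 : 0 ≤ b) (hc0 : 0 ≤ c)
    (hw : w = b * (1 - r)) (hab : a * (g - 1) = g * b + c)
    (hstep : ∀ j, j + 2 ≤ J →
      (j + 1 ∈ B → y (j + 1) ≤ g * y j + c) ∧
      (j + 1 ∉ B → y (j + 1) ≤ r * y j + w)) :
    (1 - r) * (∑ j ∈ Finset.range J, y j)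
      ≤ (∑ i ∈ Finset.range (B.card + 1), g ^ i) * (y 0 + a) + w * (J : ℝ) := by
  have hw0 : 0 ≤ w := by rw [hw]; exact mul_nonneg hb0 (by linarith)
  have key : ∀ k, k + 1 ≤ J →
      y k ≤ g ^ (B ∩ Finset.range (k + 1)).card * y 0
          + a * (g ^ (B ∩ Finset.range (k + 1)).card - 1) + b ∧
      (1 - r) * (∑ j ∈ Finset.range (k + 1), y j) + r * y k
        ≤ (∑ i ∈ Finset.range ((B ∩ Finset.range (k + 1)).card + 1), g ^ i) * (y 0 + a)
          + w * ((k + 1 : ℕ) : ℝ) := by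
    intro k
    induction k with
    | zero =>
      intro _
      have h0 : B ∩ Finset.range 1 = ∅ := by
        ext x
        simp only [Finset.mem_inter, Finset.mem_range, Finset.notMem_empty, iff_false, not_and]
        intro hxB hx
        have := hB hxB
        rw [Finset.mem_Icc] at this
        omega
      rw [h0]
      simp only [Finset.card_empty, zero_add, pow_zero, Finset.sum_range_one, Nat.cast_one]
      constructor
      · nlinarith [hb0]
      · nlinarith [hy 0, ha0, hw0]
    | succ k IH =>
      intro hk2
      obtain ⟨IH1, IH2⟩ := IH (by omega)
      obtain ⟨hbrk, hnobrk⟩ := hstep k (by omega)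
      have hG1 : (1 : ℝ) ≤ g ^ (B ∩ Finset.range (k + 1)).card := one_le_pow₀ (by linarith)
      by_cases hmem : k + 1 ∈ B
      · -- Break transition
        have hcard : (B ∩ Finset.range (k + 1 + 1)).card
            = (B ∩ Finset.range (k + 1)).card + 1 := by
          have hins : B ∩ Finset.range (k + 1 + 1)
              = insert (k + 1) (B ∩ Finset.range (k + 1)) := by
            rw [Finset.range_add_one, Finset.inter_insert_of_mem hmem]
          rw [hins, Finset.card_insert_of_notMem (by simp)]
        have hyk1 := hbrk hmem
        have h1 : g * y k ≤ g * (g ^ (B ∩ Finset.range (k + 1)).card * y 0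
            + a * (g ^ (B ∩ Finset.range (k + 1)).card - 1) + b) :=
          mul_le_mul_of_nonneg_left IH1 (by linarith)
        constructor
        · rw [hcard, pow_succ]
          nlinarith [hyk1, h1, hab, hb0]
        · rw [hcard, Finset.sum_range_succ y (k + 1),
            Finset.sum_range_succ (fun i => g ^ i) ((B ∩ Finset.range (k + 1)).card + 1),
            pow_succ]
          push_cast at IH2 ⊢
          nlinarith [IH2, hyk1, h1, hab, mul_nonneg hr0 (hy k), ha0, hw0]
      · -- No break
        have hcard : (B ∩ Finset.range (k + 1 + 1)).card
            = (B ∩ Finset.range (k + 1)).card := by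
          congr 1
          ext x
          simp only [Finset.mem_inter, Finset.mem_range]
          constructor
          · rintro ⟨h1, h2⟩
            refine ⟨h1, ?_⟩
            rcases Nat.lt_succ_iff_lt_or_eq.1 h2 with h | h
            · exact h
            · exact absurd (h ▸ h1) hmem
          · rintro ⟨h1, h2⟩
            exact ⟨h1, by omega⟩
        have hyk1 := hnobrk hmem
        have h1 : r * y k ≤ r * (g ^ (B ∩ Finset.range (k + 1)).card * y 0
            + a * (g ^ (B ∩ Finset.range (k + 1)).card - 1) + b) :=
          mul_le_mul_of_nonneg_left IH1 hr0
        have hE : (0 : ℝ) ≤ (1 - r) * (g ^ (B ∩ Finset.range (k + 1)).card * y 0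
            + a * (g ^ (B ∩ Finset.range (k + 1)).card - 1)) :=
          mul_nonneg (by linarith)
            (add_nonneg (mul_nonneg (by linarith) (hy 0)) (mul_nonneg ha0 (by linarith)))
        constructor
        · rw [hcard]
          nlinarith [hyk1, h1, hw, hE, hb0]
        · rw [hcard, Finset.sum_range_succ y (k + 1)]
          push_cast at IH2 ⊢
          linarith [IH2, hyk1, hw0]
  obtain ⟨-, h2⟩ := key (J - 1) (by omega)
  have hJ1 : J - 1 + 1 = J := by omega
  rw [hJ1] at h2
  have hBJ : B ∩ Finset.range J = B := by
    apply Finset.inter_eq_left.mpr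
    intro x hx
    have := hB hx
    rw [Finset.mem_Icc] at this
    simp only [Finset.mem_range]
    omega
  rw [hBJ] at h2
  linarith [h2, mul_nonneg hr0 (hy (J - 1))]

/-- Bound on the sum of episode-start state norms for the switching algorithm:
transitions into episodes in `B` (Breaks, at most 𝕄 of them) only satisfy the
Lipschitz-type bound, while all other transitions satisfy the E-ISS recursion. -/
theorem sum_episode_starts_bound (κ Lf Lπ ρ β wmax pibar0 γ1 c α8 : ℝ) (τ : ℕ)
    (hκ : 1 ≤ κ) (hLf : 1 ≤ Lf) (hLπ : 1 ≤ Lπ) (hρ0 : 0 < ρ) (hρ1 : ρ < 1)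
    (hβ : 0 ≤ β) (hw : 0 ≤ wmax) (hpibar0 : 0 ≤ pibar0) (hτ : 1 ≤ τ)
    (hsmall : 2 * (2 * κ ^ 2 * ρ ^ (2 * τ)) ^ 2 < 1)
    (hγ1 : γ1 = 2 * Lf ^ 2 * (1 + Lπ) ^ 2 * κ ^ 2)
    (hc : c = Lf * ((1 + Lπ) * β * wmax + wmax + pibar0))
    (hα8 : α8 = Real.sqrt (γ1 / 2) * (β * wmax) / (1 - κ * ρ ^ τ) + c)
    (J 𝕄 : ℕ) (hJ : 1 ≤ J) (y : ℕ → ℝ) (hy : ∀ j, 0 ≤ y j)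
    (B : Finset ℕ) (hB : B ⊆ Finset.Icc 1 (J - 1)) (hBcard : B.card ≤ 𝕄)
    (hstep : ∀ j, j + 2 ≤ J →
      (j + 1 ∈ B → y (j + 1) ≤ Real.sqrt (γ1 / 2) * y j + c) ∧
      (j + 1 ∉ B → y (j + 1) ≤ κ * ρ ^ τ * y j + β * wmax)) :
    ∑ j ∈ Finset.range J, y j
      ≤ 1 / (1 - κ * ρ ^ τ)
          * ((Real.sqrt (γ1 / 2) ^ (𝕄 + 1) - 1) / (Real.sqrt (γ1 / 2) - 1))
          * (y 0 + α8 / (Real.sqrt (γ1 / 2) - 1))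
        + β * wmax * (J : ℝ) / (1 - κ * ρ ^ τ) := by
  obtain ⟨g, hgdef⟩ : ∃ x, Real.sqrt (γ1 / 2) = x := ⟨_, rfl⟩
  obtain ⟨r, hrdef⟩ : ∃ x, κ * ρ ^ τ = x := ⟨_, rfl⟩
  rw [hgdef, hrdef] at hα8 ⊢
  simp only [hgdef, hrdef] at hstep
  -- basic facts about r
  have hρτ : 0 < ρ ^ τ := pow_pos hρ0 τ
  have hr0 : 0 ≤ r := hrdef ▸ mul_nonneg (by linarith) hρτ.le
  have hr4 : 8 * r ^ 4 < 1 := by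
    have hrw : 2 * κ ^ 2 * ρ ^ (2 * τ) = 2 * r ^ 2 := by
      rw [← hrdef, mul_comm 2 τ, pow_mul]; ring
    rw [hrw] at hsmall; nlinarith [hsmall]
  have hr1 : r < 1 := by
    by_contra h
    push_neg at h
    have h4 : (1 : ℝ) ^ 4 ≤ r ^ 4 := pow_le_pow_left₀ (by norm_num) h 4
    simp at h4; linarith
  have h1r : 0 < 1 - r := by linarith
  -- basic facts about g
  have hL2 : (2 : ℝ) ≤ 1 + Lπ := by linarith
  have hLnn : (0 : ℝ) ≤ Lf * (1 + Lπ) * κ :=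
    mul_nonneg (mul_nonneg (by linarith) (by linarith)) (by linarith)
  have hgval : g = Lf * (1 + Lπ) * κ := by
    rw [← hgdef, hγ1,
      show 2 * Lf ^ 2 * (1 + Lπ) ^ 2 * κ ^ 2 / 2 = (Lf * (1 + Lπ) * κ) ^ 2 by ring,
      Real.sqrt_sq hLnn]
  have hg2 : 2 ≤ g := by
    rw [hgval]
    have h1 : (1 : ℝ) * (1 + Lπ) ≤ Lf * (1 + Lπ) := by
      apply mul_le_mul_of_nonneg_right hLf (by linarith)
    have h2 : Lf * (1 + Lπ) * 1 ≤ Lf * (1 + Lπ) * κ := by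
      apply mul_le_mul_of_nonneg_left hκ (by linarith)
    linarith
  have hg1 : 0 < g - 1 := by linarith
  -- the constants a, b
  have hc0 : 0 ≤ c := by
    rw [hc]
    have h1 : (0 : ℝ) ≤ (1 + Lπ) * β * wmax :=
      mul_nonneg (mul_nonneg (by linarith) hβ) hw
    nlinarith
  have hα0 : 0 ≤ α8 := by
    rw [hα8]
    have : 0 ≤ g * (β * wmax) / (1 - r) :=
      div_nonneg (mul_nonneg (by linarith) (mul_nonneg hβ hw)) h1r.le
    linarith
  have ha0 : 0 ≤ α8 / (g - 1) := div_nonneg hα0 hg1.le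
  have hb0 : 0 ≤ β * wmax / (1 - r) := div_nonneg (mul_nonneg hβ hw) h1r.le
  have hbw : β * wmax = β * wmax / (1 - r) * (1 - r) := (div_mul_cancel₀ _ (ne_of_gt h1r)).symm
  have haα : α8 / (g - 1) * (g - 1) = α8 := div_mul_cancel₀ _ (ne_of_gt hg1)
  have hab : α8 / (g - 1) * (g - 1) = g * (β * wmax / (1 - r)) + c := by
    rw [haα, hα8, mul_div_assoc]
  -- apply the auxiliary lemma
  have h2 := sum_episode_starts_aux r g (α8 / (g - 1)) (β * wmax / (1 - r)) c (β * wmax)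
    J hJ y hy B hB hr0 hr1 hg2 ha0 hb0 hc0 hbw hab hstep
  have hgeom : ∑ i ∈ Finset.range (B.card + 1), g ^ i = (g ^ (B.card + 1) - 1) / (g - 1) :=
    geom_sum_eq (by linarith) (B.card + 1)
  rw [hgeom] at h2
  have hM0 : 0 ≤ y 0 + α8 / (g - 1) := add_nonneg (hy 0) ha0
  have hQle : (g ^ (B.card + 1) - 1) / (g - 1) ≤ (g ^ (𝕄 + 1) - 1) / (g - 1) := by
    apply (div_le_div_iff_of_pos_right hg1).mpr
    have : g ^ (B.card + 1) ≤ g ^ (𝕄 + 1) := pow_le_pow_right₀ (by linarith) (by omega)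
    linarith
  have h3 : ∑ j ∈ Finset.range J, y j
      ≤ ((g ^ (B.card + 1) - 1) / (g - 1) * (y 0 + α8 / (g - 1)) + β * wmax * (J : ℝ))
        / (1 - r) := by
    rw [le_div_iff₀ h1r]
    linarith [h2]
  have h4 : (g ^ (B.card + 1) - 1) / (g - 1) * (y 0 + α8 / (g - 1))
      ≤ (g ^ (𝕄 + 1) - 1) / (g - 1) * (y 0 + α8 / (g - 1)) :=
    mul_le_mul_of_nonneg_right hQle hM0
  calc ∑ j ∈ Finset.range J, y j
      ≤ ((g ^ (B.card + 1) - 1) / (g - 1) * (y 0 + α8 / (g - 1)) + β * wmax * (J : ℝ))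
        / (1 - r) := h3
    _ ≤ ((g ^ (𝕄 + 1) - 1) / (g - 1) * (y 0 + α8 / (g - 1)) + β * wmax * (J : ℝ))
        / (1 - r) := by apply (div_le_div_iff_of_pos_right h1r).mpr; linarith
    _ = 1 / (1 - r) * ((g ^ (𝕄 + 1) - 1) / (g - 1)) * (y 0 + α8 / (g - 1))
        + β * wmax * (J : ℝ) / (1 - r) := by ring
end

section
/- Let κ ≥ 1, L_f ≥ 1, L_π ≥ 1, 0 < ρ < 1, β ≥ 0, w_max ≥ 0, π̄0 ≥ 0, and an integer τ ≥ 1 with 2γ0² < 1 where γ0 := 2κ²ρ^{2τ}; set γ1 := 2L_f²(1+L_π)²κ², c := L_f((1+L_π)β w_max + w_max + π̄0), α9 := 2γ1 β² w_max²/(1−γ0) + 2c², and α10 := 8c⁴ + 16γ1² β⁴ w_max⁴/(1−2γ0²). Let J ≥ 1 and 𝕄 be natural numbers, let y : ℕ → ℝ satisfy y_j ≥ 0 for all j, and let B ⊆ {1,…,J−1} be a set with |B| ≤ 𝕄 such that for every j with 0 ≤ j ≤ J−2: if j+1 ∈ B then y_{j+1} ≤ √(γ1/2)·y_j + c, and otherwise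 y_{j+1} ≤ κρ^τ y_j + β w_max. Then Σ_{j=0}^{J−1} y_j² ≤ (1/(1−γ0)) · (γ1^{𝕄+1} − 1)/(γ1 − 1) · (y_0² + α9/(γ1 − 1)) + 2β² w_max² · J/(1−γ0), and Σ_{j=0}^{J−1} y_j⁴ ≤ (1/(1−2γ0²)) · ((2γ1²)^{𝕄+1} − 1)/(2γ1² − 1) · (y_0⁴ + α10/(2γ1² − 1)) + 8β⁴ w_max⁴ · J/(1−2γ0²). -/
lemma episode_sum_bound (g0 g1 d e : ℝ) (hg0 : 0 ≤ g0) (hg0' : g0 < 1)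
    (hg1 : 1 < g1) (hd : 0 ≤ d) (he : 0 ≤ e)
    (J M : ℕ) (hJ : 1 ≤ J) (z : ℕ → ℝ) (hz : ∀ j, 0 ≤ z j)
    (B : Finset ℕ) (hB : B ⊆ Finset.Icc 1 (J - 1)) (hBcard : B.card ≤ M)
    (hstep : ∀ j, j + 2 ≤ J →
      (j + 1 ∈ B → z (j + 1) ≤ g1 * z j + e) ∧
      (j + 1 ∉ B → z (j + 1) ≤ g0 * z j + d)) :
    ∑ j ∈ Finset.range J, z j
      ≤ 1 / (1 - g0) * ((g1 ^ (M + 1) - 1) / (g1 - 1))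
          * (z 0 + (g1 * d / (1 - g0) + e) / (g1 - 1))
        + d * J / (1 - g0) := by
  have h1 : (0:ℝ) < 1 - g0 := by linarith
  set E : ℝ := (1 - g0)⁻¹ with hE_def
  clear_value E
  have hE : 0 < E := by rw [hE_def]; positivity
  have hE1 : E * (1 - g0) = 1 := by rw [hE_def]; exact inv_mul_cancel₀ (ne_of_gt h1)
  set D : ℝ := d * E with hD_def
  clear_value D
  have hD : 0 ≤ D := by rw [hD_def]; exact mul_nonneg hd hE.le
  set A : ℝ := g1 * D + e with hA_def
  clear_value A
  have hA : 0 ≤ A := by rw [hA_def]; nlinarith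
  have hg1' : (0:ℝ) < g1 - 1 := by linarith
  set K : ℝ := A / (g1 - 1) with hK_def
  clear_value K
  have hK : 0 ≤ K := by rw [hK_def]; exact div_nonneg hA hg1'.le
  have hgK : g1 * K = A + K := by
    rw [hK_def]
    field_simp
    ring
  set W : ℝ := z 0 + K with hW_def
  clear_value W
  have hW : 0 ≤ W := by rw [hW_def]; exact add_nonneg (hz 0) hK
  have hKW : K ≤ W := by have := hz 0; rw [hW_def]; linarith
  -- main invariant
  have inv : ∀ j, j + 1 ≤ J → ∃ s m : ℕ, m ≤ (B ∩ Finset.Icc 1 j).card ∧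
      z j ≤ g0 ^ s * (g1 ^ m * W - K) + D ∧
      (∑ i ∈ Finset.range (j + 1), z i) + g0 ^ (s + 1) * E * (g1 ^ m * W)
        ≤ (∑ k ∈ Finset.range (m + 1), g1 ^ k) * W * E + D * (j + 1) := by
    intro j
    induction j with
    | zero =>
      intro _
      refine ⟨0, 0, Nat.zero_le _, ?_, ?_⟩
      · rw [hW_def]; simp only [pow_zero, one_mul]; linarith
      · have h2 : W * E - g0 * E * W = W := by linear_combination W * hE1
        have h3 := hz 0
        simp only [Finset.sum_range_one, pow_one, pow_zero, one_mul, Nat.cast_zero,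
          zero_add, mul_one]
        linarith [hKW]
    | succ n ih =>
      intro hn1
      obtain ⟨s, m, hm, hP, hQ⟩ := ih (by omega)
      have hstepn := hstep n (by omega)
      have hg1m : (1:ℝ) ≤ g1 ^ m := one_le_pow₀ hg1.le
      have hX : 0 ≤ g1 ^ m * W - K := by nlinarith
      have hg0s : g0 ^ s ≤ 1 := pow_le_one₀ hg0 hg0'.le
      have hg0s0 : (0:ℝ) ≤ g0 ^ s := pow_nonneg hg0 s
      have hcastn : D * (((n + 1 : ℕ) : ℝ) + 1) = D * ((n : ℝ) + 1) + D := by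
        push_cast; ring
      by_cases hb : n + 1 ∈ B
      · -- Break step
        have hz1 : z (n + 1) ≤ g1 ^ (m + 1) * W - K + D := by
          have hb1 : z (n + 1) ≤ g1 * z n + e := hstepn.1 hb
          have e1 : g1 * z n ≤ g1 * (g0 ^ s * (g1 ^ m * W - K) + D) :=
            mul_le_mul_of_nonneg_left hP (by linarith)
          have e1' : g1 * (g0 ^ s * (g1 ^ m * W - K) + D)
              = g1 * (g0 ^ s * (g1 ^ m * W - K)) + g1 * D := by ring
          have h3 : g0 ^ s * (g1 ^ m * W - K) ≤ g1 ^ m * W - K := by nlinarith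
          have e2 : g1 * (g0 ^ s * (g1 ^ m * W - K)) ≤ g1 * (g1 ^ m * W - K) :=
            mul_le_mul_of_nonneg_left h3 (by linarith)
          have e3 : g1 * (g1 ^ m * W - K) = g1 ^ (m + 1) * W - (A + K) := by
            rw [pow_succ]; linear_combination (-1 : ℝ) * hgK
          simp only [hA_def] at e3
          linarith
        refine ⟨0, m + 1, ?_, ?_, ?_⟩
        · have hnot : n + 1 ∉ B ∩ Finset.Icc 1 n := by
            simp only [Finset.mem_inter, Finset.mem_Icc]
            omega
          have hsub : insert (n + 1) (B ∩ Finset.Icc 1 n) ⊆ B ∩ Finset.Icc 1 (n + 1) := by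
            intro x hx
            simp only [Finset.mem_insert, Finset.mem_inter, Finset.mem_Icc] at hx ⊢
            rcases hx with rfl | ⟨h1, h2, h3⟩
            · exact ⟨hb, by omega, le_refl _⟩
            · exact ⟨h1, h2, by omega⟩
          calc m + 1 ≤ (B ∩ Finset.Icc 1 n).card + 1 := by omega
            _ = (insert (n + 1) (B ∩ Finset.Icc 1 n)).card :=
                (Finset.card_insert_of_notMem hnot).symm
            _ ≤ (B ∩ Finset.Icc 1 (n + 1)).card := Finset.card_le_card hsub
        · simp only [pow_zero, one_mul]
          linarith
        · have hsz : ∑ i ∈ Finset.range (n + 1 + 1), z i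
              = (∑ i ∈ Finset.range (n + 1), z i) + z (n + 1) := Finset.sum_range_succ _ _
          have hsg : ∑ k ∈ Finset.range (m + 1 + 1), g1 ^ k
              = (∑ k ∈ Finset.range (m + 1), g1 ^ k) + g1 ^ (m + 1) := Finset.sum_range_succ _ _
          rw [hsz, hsg]
          have hP1 : (0:ℝ) ≤ g0 ^ (s + 1) * E * (g1 ^ m * W) := by positivity
          have key : g1 ^ (m + 1) * W * E - g0 ^ (0 + 1) * E * (g1 ^ (m + 1) * W)
              = g1 ^ (m + 1) * W := by
            linear_combination (g1 ^ (m + 1) * W) * hE1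
          have e4 : ((∑ k ∈ Finset.range (m + 1), g1 ^ k) + g1 ^ (m + 1)) * W * E
              = (∑ k ∈ Finset.range (m + 1), g1 ^ k) * W * E + g1 ^ (m + 1) * W * E := by
            ring
          linarith [hQ, hz1, hP1, key, e4, hcastn, hK]
      · -- Normal step
        have hdD : g0 * D + d = D := by linear_combination (-d) * hE1 + (g0 - 1) * hD_def
        have hb1 : z (n + 1) ≤ g0 * z n + d := hstepn.2 hb
        have e1 : g0 * z n ≤ g0 * (g0 ^ s * (g1 ^ m * W - K) + D) :=
          mul_le_mul_of_nonneg_left hP hg0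
        have e2 : g0 * (g0 ^ s * (g1 ^ m * W - K) + D)
            = g0 ^ (s + 1) * (g1 ^ m * W - K) + g0 * D := by rw [pow_succ]; ring
        have hz1 : z (n + 1) ≤ g0 ^ (s + 1) * (g1 ^ m * W - K) + D := by linarith
        refine ⟨s + 1, m, ?_, hz1, ?_⟩
        · refine hm.trans (Finset.card_le_card ?_)
          exact Finset.inter_subset_inter (subset_refl B)
            (Finset.Icc_subset_Icc_right (Nat.le_succ n))
        · have hsz : ∑ i ∈ Finset.range (n + 1 + 1), z i
              = (∑ i ∈ Finset.range (n + 1), z i) + z (n + 1) := Finset.sum_range_succ _ _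
          rw [hsz]
          set P : ℝ := g0 ^ (s + 1) * (g1 ^ m * W) with hP_def
          clear_value P
          have hP0 : 0 ≤ P := by rw [hP_def]; positivity
          have hs1 : (0:ℝ) ≤ g0 ^ (s + 1) := pow_nonneg hg0 _
          have e5 : g0 ^ (s + 1) * (g1 ^ m * W - K) ≤ P := by
            have : g0 ^ (s + 1) * (g1 ^ m * W - K) ≤ g0 ^ (s + 1) * (g1 ^ m * W) :=
              mul_le_mul_of_nonneg_left (by linarith) hs1
            simpa [hP_def] using this
          have e6 : g0 ^ (s + 1) * E * (g1 ^ m * W) = E * P := by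
            simp only [hP_def]; ring
          have e7 : g0 ^ (s + 1 + 1) * E * (g1 ^ m * W) = g0 * E * P := by
            rw [pow_succ]; simp only [hP_def]; ring
          have key : P + g0 * E * P = E * P := by linear_combination (-P) * hE1
          linarith [hQ, hz1, e5, e6, e7, key, hcastn]
  -- conclude
  obtain ⟨s, m, hm, _, hQ⟩ := inv (J - 1) (by omega)
  have hJ1 : J - 1 + 1 = J := by omega
  rw [hJ1] at hQ
  have hmM : m ≤ M := by
    calc m ≤ (B ∩ Finset.Icc 1 (J - 1)).card := hm
      _ ≤ B.card := Finset.card_le_card Finset.inter_subset_left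
      _ ≤ M := hBcard
  have hsum : (∑ k ∈ Finset.range (m + 1), g1 ^ k) ≤ ∑ k ∈ Finset.range (M + 1), g1 ^ k := by
    apply Finset.sum_le_sum_of_subset_of_nonneg
    · exact Finset.range_subset_range.mpr (by omega)
    · intro i _ _; positivity
  have hgeom : (∑ k ∈ Finset.range (M + 1), g1 ^ k) = (g1 ^ (M + 1) - 1) / (g1 - 1) :=
    geom_sum_eq (by linarith) (M + 1)
  have hWE : 0 ≤ W * E := mul_nonneg hW hE.le
  have hpos : (0:ℝ) ≤ g0 ^ (s + 1) * E * (g1 ^ m * W) := by positivity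
  have hcast : ((J - 1 : ℕ) : ℝ) + 1 = (J : ℝ) := by
    have h2 : ((J - 1 : ℕ) : ℝ) = (J : ℝ) - 1 := by
      push_cast [Nat.cast_sub hJ]; ring
    rw [h2]; ring
  have hmul := mul_le_mul_of_nonneg_right hsum hWE
  have ea : (∑ k ∈ Finset.range (m + 1), g1 ^ k) * (W * E)
      = (∑ k ∈ Finset.range (m + 1), g1 ^ k) * W * E := by ring
  have eb : (∑ k ∈ Finset.range (M + 1), g1 ^ k) * (W * E)
      = (∑ k ∈ Finset.range (M + 1), g1 ^ k) * W * E := by ring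
  have hfinal : ∑ j ∈ Finset.range J, z j
      ≤ (g1 ^ (M + 1) - 1) / (g1 - 1) * (W * E) + D * J := by
    rw [hcast] at hQ
    calc ∑ j ∈ Finset.range J, z j
        ≤ (∑ k ∈ Finset.range (m + 1), g1 ^ k) * W * E + D * J := by linarith
      _ ≤ (∑ k ∈ Finset.range (M + 1), g1 ^ k) * W * E + D * J := by linarith
      _ = (g1 ^ (M + 1) - 1) / (g1 - 1) * (W * E) + D * J := by rw [hgeom]; ring
  calc ∑ j ∈ Finset.range J, z j
      ≤ (g1 ^ (M + 1) - 1) / (g1 - 1) * (W * E) + D * J := hfinal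
    _ = 1 / (1 - g0) * ((g1 ^ (M + 1) - 1) / (g1 - 1))
          * (z 0 + (g1 * d / (1 - g0) + e) / (g1 - 1)) + d * J / (1 - g0) := by
        rw [hW_def, hK_def, hA_def, hD_def, hE_def]
        field_simp



lemma sq_add_le (a b : ℝ) : (a + b) ^ 2 ≤ 2 * a ^ 2 + 2 * b ^ 2 := by
  nlinarith [sq_nonneg (a - b)]

lemma quart_add_le (a b : ℝ) : (a + b) ^ 4 ≤ 8 * a ^ 4 + 8 * b ^ 4 := by
  nlinarith [sq_nonneg (a - b), sq_nonneg (a + b), sq_nonneg (a ^ 2 - b ^ 2),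
    sq_nonneg (a * b)]


/-- Bounds on the sums of squares and fourth powers of episode-start state norms
for the switching algorithm: transitions into episodes in `B` (Breaks, at most 𝕄
of them) only satisfy the Lipschitz-type bound, all others the E-ISS recursion. -/
theorem sum_episode_starts_sq_quartic_bound
    (κ Lf Lπ ρ β wmax pibar0 γ0 γ1 c α9 α10 : ℝ) (τ : ℕ)
    (hκ : 1 ≤ κ) (hLf : 1 ≤ Lf) (hLπ : 1 ≤ Lπ) (hρ0 : 0 < ρ) (hρ1 : ρ < 1)
    (hβ : 0 ≤ β) (hw : 0 ≤ wmax) (hpibar0 : 0 ≤ pibar0) (hτ : 1 ≤ τ)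
    (hγ0 : γ0 = 2 * κ ^ 2 * ρ ^ (2 * τ)) (hsmall : 2 * γ0 ^ 2 < 1)
    (hγ1 : γ1 = 2 * Lf ^ 2 * (1 + Lπ) ^ 2 * κ ^ 2)
    (hc : c = Lf * ((1 + Lπ) * β * wmax + wmax + pibar0))
    (hα9 : α9 = 2 * γ1 * β ^ 2 * wmax ^ 2 / (1 - γ0) + 2 * c ^ 2)
    (hα10 : α10 = 8 * c ^ 4 + 16 * γ1 ^ 2 * β ^ 4 * wmax ^ 4 / (1 - 2 * γ0 ^ 2))
    (J 𝕄 : ℕ) (hJ : 1 ≤ J) (y : ℕ → ℝ) (hy : ∀ j, 0 ≤ y j)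
    (B : Finset ℕ) (hB : B ⊆ Finset.Icc 1 (J - 1)) (hBcard : B.card ≤ 𝕄)
    (hstep : ∀ j, j + 2 ≤ J →
      (j + 1 ∈ B → y (j + 1) ≤ Real.sqrt (γ1 / 2) * y j + c) ∧
      (j + 1 ∉ B → y (j + 1) ≤ κ * ρ ^ τ * y j + β * wmax)) :
    (∑ j ∈ Finset.range J, y j ^ 2
      ≤ 1 / (1 - γ0) * ((γ1 ^ (𝕄 + 1) - 1) / (γ1 - 1)) * (y 0 ^ 2 + α9 / (γ1 - 1))
        + 2 * β ^ 2 * wmax ^ 2 * (J : ℝ) / (1 - γ0)) ∧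
    (∑ j ∈ Finset.range J, y j ^ 4
      ≤ 1 / (1 - 2 * γ0 ^ 2)
          * (((2 * γ1 ^ 2) ^ (𝕄 + 1) - 1) / (2 * γ1 ^ 2 - 1))
          * (y 0 ^ 4 + α10 / (2 * γ1 ^ 2 - 1))
        + 8 * β ^ 4 * wmax ^ 4 * (J : ℝ) / (1 - 2 * γ0 ^ 2)) := by
  have hγ00 : 0 ≤ γ0 := by rw [hγ0]; positivity
  have hγ01 : γ0 < 1 := by
    have e1 : (γ0 - 1) ^ 2 = γ0 ^ 2 - 2 * γ0 + 1 := by ring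
    have e2 : (0:ℝ) ≤ (γ0 - 1) ^ 2 := sq_nonneg _
    linarith
  have hLf2 : 1 ≤ Lf ^ 2 := one_le_pow₀ hLf
  have hκ2 : 1 ≤ κ ^ 2 := one_le_pow₀ hκ
  have hLπ2 : 4 ≤ (1 + Lπ) ^ 2 := by
    have e1 : 2 ≤ 1 + Lπ := by linarith
    have e2 : (2:ℝ) * 2 ≤ (1 + Lπ) * (1 + Lπ) :=
      mul_le_mul e1 e1 (by norm_num) (by linarith)
    have e3 : (1 + Lπ) ^ 2 = (1 + Lπ) * (1 + Lπ) := sq (1 + Lπ)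
    linarith
  have hγ11 : 1 < γ1 := by
    have h4 : (4:ℝ) ≤ Lf ^ 2 * (1 + Lπ) ^ 2 := by
      have := mul_le_mul hLf2 hLπ2 (by norm_num) (by positivity : (0:ℝ) ≤ Lf ^ 2)
      linarith
    have h5 : (4:ℝ) ≤ Lf ^ 2 * (1 + Lπ) ^ 2 * κ ^ 2 := by
      have := mul_le_mul h4 hκ2 (by norm_num)
        (by positivity : (0:ℝ) ≤ Lf ^ 2 * (1 + Lπ) ^ 2)
      linarith
    rw [hγ1]; linarith
  have hLπ0 : (0:ℝ) ≤ 1 + Lπ := by linarith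
  have hc0 : 0 ≤ c := by
    rw [hc]
    exact mul_nonneg (by linarith)
      (add_nonneg (add_nonneg (mul_nonneg (mul_nonneg hLπ0 hβ) hw) hw) hpibar0)
  have hsq : Real.sqrt (γ1 / 2) ^ 2 = γ1 / 2 := Real.sq_sqrt (by linarith)
  have hρτ : ρ ^ (2 * τ) = (ρ ^ τ) ^ 2 := by rw [mul_comm, pow_mul]
  have hstep2 : ∀ j, j + 2 ≤ J →
      ((j + 1 ∈ B → y (j + 1) ^ 2 ≤ γ1 * y j ^ 2 + 2 * c ^ 2) ∧
       (j + 1 ∉ B → y (j + 1) ^ 2 ≤ γ0 * y j ^ 2 + 2 * β ^ 2 * wmax ^ 2)) := by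
    intro j hj
    obtain ⟨h1, h2⟩ := hstep j hj
    constructor
    · intro hb
      have hyb := h1 hb
      have hp : y (j + 1) ^ 2 ≤ (Real.sqrt (γ1 / 2) * y j + c) ^ 2 :=
        pow_le_pow_left₀ (hy _) hyb 2
      have he : (Real.sqrt (γ1 / 2) * y j) ^ 2 = γ1 / 2 * y j ^ 2 := by
        rw [mul_pow, hsq]
      linarith [hp, sq_add_le (Real.sqrt (γ1 / 2) * y j) c, he]
    · intro hb
      have hyb := h2 hb
      have hp : y (j + 1) ^ 2 ≤ (κ * ρ ^ τ * y j + β * wmax) ^ 2 :=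
        pow_le_pow_left₀ (hy _) hyb 2
      have he : 2 * (κ * ρ ^ τ * y j) ^ 2 = γ0 * y j ^ 2 := by
        rw [hγ0, hρτ]; ring
      linarith [hp, sq_add_le (κ * ρ ^ τ * y j) (β * wmax), he]
  have hstep4 : ∀ j, j + 2 ≤ J →
      ((j + 1 ∈ B → y (j + 1) ^ 4 ≤ 2 * γ1 ^ 2 * y j ^ 4 + 8 * c ^ 4) ∧
       (j + 1 ∉ B → y (j + 1) ^ 4 ≤ 2 * γ0 ^ 2 * y j ^ 4 + 8 * β ^ 4 * wmax ^ 4)) := by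
    intro j hj
    obtain ⟨h1, h2⟩ := hstep j hj
    constructor
    · intro hb
      have hyb := h1 hb
      have hp : y (j + 1) ^ 4 ≤ (Real.sqrt (γ1 / 2) * y j + c) ^ 4 :=
        pow_le_pow_left₀ (hy _) hyb 4
      have he : (Real.sqrt (γ1 / 2) * y j) ^ 4 = γ1 ^ 2 / 4 * y j ^ 4 := by
        rw [mul_pow, show (4:ℕ) = 2 * 2 from rfl, pow_mul, hsq]; ring
      linarith [hp, quart_add_le (Real.sqrt (γ1 / 2) * y j) c, he]
    · intro hb
      have hyb := h2 hb
      have hp : y (j + 1) ^ 4 ≤ (κ * ρ ^ τ * y j + β * wmax) ^ 4 :=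
        pow_le_pow_left₀ (hy _) hyb 4
      have he : 8 * (κ * ρ ^ τ * y j) ^ 4 = 2 * γ0 ^ 2 * y j ^ 4 := by
        rw [hγ0, hρτ]; ring
      linarith [hp, quart_add_le (κ * ρ ^ τ * y j) (β * wmax), he]
  constructor
  · -- squares
    have h := episode_sum_bound γ0 γ1 (2 * β ^ 2 * wmax ^ 2) (2 * c ^ 2)
      hγ00 hγ01 hγ11 (by positivity) (by positivity) J 𝕄 hJ (fun j => y j ^ 2)
      (fun j => sq_nonneg _) B hB hBcard hstep2
    calc ∑ j ∈ Finset.range J, y j ^ 2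
          ≤ 1 / (1 - γ0) * ((γ1 ^ (𝕄 + 1) - 1) / (γ1 - 1))
            * (y 0 ^ 2 + (γ1 * (2 * β ^ 2 * wmax ^ 2) / (1 - γ0) + 2 * c ^ 2) / (γ1 - 1))
            + 2 * β ^ 2 * wmax ^ 2 * (J : ℝ) / (1 - γ0) := h
        _ = 1 / (1 - γ0) * ((γ1 ^ (𝕄 + 1) - 1) / (γ1 - 1)) * (y 0 ^ 2 + α9 / (γ1 - 1))
            + 2 * β ^ 2 * wmax ^ 2 * (J : ℝ) / (1 - γ0) := by rw [hα9]; ring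
  · -- quartics
    have hg0' : (0:ℝ) ≤ 2 * γ0 ^ 2 := by positivity
    have hg1' : (1:ℝ) < 2 * γ1 ^ 2 := by
      have := one_lt_pow₀ hγ11 (two_ne_zero)
      linarith
    have h := episode_sum_bound (2 * γ0 ^ 2) (2 * γ1 ^ 2) (8 * β ^ 4 * wmax ^ 4) (8 * c ^ 4)
      hg0' hsmall hg1' (by positivity) (by positivity) J 𝕄 hJ (fun j => y j ^ 4)
      (fun j => by positivity) B hB hBcard hstep4
    calc ∑ j ∈ Finset.range J, y j ^ 4
          ≤ 1 / (1 - 2 * γ0 ^ 2) * (((2 * γ1 ^ 2) ^ (𝕄 + 1) - 1) / (2 * γ1 ^ 2 - 1))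
            * (y 0 ^ 4 + (2 * γ1 ^ 2 * (8 * β ^ 4 * wmax ^ 4) / (1 - 2 * γ0 ^ 2) + 8 * c ^ 4)
                / (2 * γ1 ^ 2 - 1))
            + 8 * β ^ 4 * wmax ^ 4 * (J : ℝ) / (1 - 2 * γ0 ^ 2) := h
        _ = 1 / (1 - 2 * γ0 ^ 2) * (((2 * γ1 ^ 2) ^ (𝕄 + 1) - 1) / (2 * γ1 ^ 2 - 1))
            * (y 0 ^ 4 + α10 / (2 * γ1 ^ 2 - 1))
            + 8 * β ^ 4 * wmax ^ 4 * (J : ℝ) / (1 - 2 * γ0 ^ 2) := by rw [hα10]; ring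
end

section
/- Let L_f ≥ 1, L_π ≥ 1, κ ≥ 1, β ≥ 1, 0 < ρ < 1, w_max ≥ 0, π̄0 ≥ 0 and an integer τ ≥ 1 with 2√2·κ·ρ^τ ≤ 1. Let f : ℝ^n × ℝ^m × ℝ^n → ℝ^n satisfy ‖f(x,u,w) − f(x',u',w')‖ ≤ L_f(‖x−x'‖+‖u−u'‖+‖w−w'‖) for all arguments and f(0,0,0) = 0; for each t let π_t : ℝ^n → ℝ^m be L_π-Lipschitz with ‖π_t(0)‖ ≤ π̄0; let ‖w_t‖ ≤ w_max for all t and x_{t+1} = f(x_t, π_t(x_t), w_t) for 0 ≤ t ≤ T−1. Suppose there are episode boundaries 0 = t_0 < t_1 < ⋯ < t_J = T+1 and a set B ⊆ {0,…,J−2} with |B| ≤ 𝕄 such that: (i) for every 0 ≤ j ≤ J−1 and every t with t_j < t ≤ t_{j+1}−1, ‖x_t‖ ≤ κ ρ^{t−t_j}‖x_{t_j}‖ + β w_max; (ii) for every j ∈ {0,…,J−2} ∖ B, t_{j+1} − t_j = τ and ‖x_{t_{j+1}}‖ ≤ κ ρ^{τ}‖x_{t_j}‖ + β w_max. Then, with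 γ := L_f(1+L_π)κ, α1 := κ/((1−ρ)(1−κρ^τ)), α2 := α1·γ/(γ−1) and α3 := α2·(γ/(1−κρ^τ) + L_f(2+L_π)), one has Σ_{t=0}^{T} ‖x_t‖ ≤ β w_max (T + α1 J) + α2 γ^𝕄 ‖x_0‖ + α3 γ^𝕄 (β w_max + π̄0). -/
set_option maxHeartbeats 4000000


lemma geom_aux {ρ : ℝ} (h0 : 0 ≤ ρ) (h1 : ρ < 1) (ℓ : ℕ) :
    ∑ i ∈ Finset.range ℓ, ρ ^ i ≤ 1 / (1 - ρ) := by
  have h1ρ : 0 < 1 - ρ := by linarith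
  have hpow : 0 ≤ ρ ^ ℓ := pow_nonneg h0 _
  rw [geom_sum_eq (ne_of_lt h1)]
  calc (ρ ^ ℓ - 1) / (ρ - 1) = (1 - ρ ^ ℓ) / (1 - ρ) := by
        rw [← neg_div_neg_eq]; ring_nf
    _ ≤ 1 / (1 - ρ) := by
        gcongr
        linarith

lemma key_sum (u : ℕ → ℝ) (hu : ∀ j, 0 ≤ u j) (N : ℕ) (hN : 1 ≤ N)
    (c γ e D : ℝ) (hc0 : 0 ≤ c) (hc1 : c ≤ 1/2) (hγ2 : 2 ≤ γ)
    (he : 0 ≤ e) (hD : 0 ≤ D)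
    (B : Finset ℕ) (𝕄 : ℕ) (hB : B ⊆ Finset.range (N - 1)) (hcard : B.card ≤ 𝕄)
    (hgood : ∀ j, j + 2 ≤ N → j ∉ B → u (j + 1) ≤ c * u j + e)
    (hbad : ∀ j, j + 2 ≤ N → j ∈ B → u (j + 1) ≤ γ * u j + D) :
    ∑ j ∈ Finset.range N, u j
      ≤ γ / ((γ - 1) * (1 - c)) * (γ ^ 𝕄 * (u 0 + e / (1 - c) + D)) + N * (e / (1 - c)) := by
  have h1c : (0:ℝ) < 1 - c := by linarith
  have hγ1 : (1:ℝ) ≤ γ - 1 := by linarith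
  have hγ0 : (0:ℝ) < γ := by linarith
  set h : ℝ := e / (1 - c) with hh_def
  set P : ℝ := γ / ((γ - 1) * (1 - c)) with hP_def
  set A : ℕ → ℝ := fun b => γ ^ b * (u 0 + h) + (γ ^ b - 1) * (D / (γ - 1)) with hA_def
  have hh0 : 0 ≤ h := div_nonneg he h1c.le
  have hhe : (1 - c) * h = e := by
    rw [hh_def]; field_simp
  have hDγ : 0 ≤ D / (γ - 1) := div_nonneg hD (by linarith)
  have hpow1 : ∀ b : ℕ, (1:ℝ) ≤ γ ^ b := fun b => one_le_pow₀ (by linarith)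
  have hA_ge : ∀ b, u 0 + h ≤ A b := by
    intro b
    have h1 := hpow1 b
    have h2 : 0 ≤ (γ ^ b - 1) * (D / (γ - 1)) := mul_nonneg (by linarith) hDγ
    have hu0 : 0 ≤ u 0 := hu 0
    show u 0 + h ≤ γ ^ b * (u 0 + h) + (γ ^ b - 1) * (D / (γ - 1))
    nlinarith
  have hA_nonneg : ∀ b, 0 ≤ A b := by
    intro b
    have := hA_ge b
    have hu0 : 0 ≤ u 0 := hu 0
    linarith
  have hA_rec : ∀ b, A (b + 1) = γ * A b + D := by
    intro b
    show γ ^ (b+1) * (u 0 + h) + (γ ^ (b+1) - 1) * (D / (γ - 1))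
        = γ * (γ ^ b * (u 0 + h) + (γ ^ b - 1) * (D / (γ - 1))) + D
    rw [pow_succ]
    field_simp
    ring
  have hP1 : 1 / (1 - c) ≤ P := by
    rw [hP_def, div_le_div_iff₀ h1c (by positivity)]
    nlinarith
  have hP0 : 0 < P := lt_of_lt_of_le (by positivity) hP1
  -- the main invariant
  have main : ∀ k, k + 1 ≤ N →
      u k ≤ A ((B ∩ Finset.range k).card) ∧
      (∑ j ∈ Finset.range (k + 1), u j) + (c / (1 - c)) * u k
        ≤ P * A ((B ∩ Finset.range k).card) + (k + 1) * h := by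
    intro k
    induction k with
    | zero =>
      intro _
      have hAz : A 0 = u 0 + h := by
        show γ ^ 0 * (u 0 + h) + (γ ^ 0 - 1) * (D / (γ - 1)) = u 0 + h
        simp
      have hu0 : 0 ≤ u 0 := hu 0
      constructor
      · simp only [Finset.range_zero, Finset.inter_empty, Finset.card_empty, hAz]
        linarith
      · simp only [Finset.range_zero, Finset.inter_empty, Finset.card_empty, hAz,
          zero_add, Finset.sum_range_one, Nat.cast_zero]
        have hid : u 0 + c / (1 - c) * u 0 = 1 / (1 - c) * u 0 := by field_simp; ring
        have h2 : (1 / (1 - c)) * u 0 ≤ P * u 0 := mul_le_mul_of_nonneg_right hP1 hu0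
        have hPdist : P * (u 0 + h) = P * u 0 + P * h := by ring
        have hPh : 0 ≤ P * h := mul_nonneg hP0.le hh0
        linarith
    | succ k ih =>
      intro hk1
      have hk2 : k + 2 ≤ N := hk1
      obtain ⟨ihp, ihs⟩ := ih (by omega)
      set b := (B ∩ Finset.range k).card with hb_def
      have huk0 : 0 ≤ u k := hu k
      have huk1 : 0 ≤ u (k + 1) := hu (k + 1)
      have hrange : Finset.range (k + 1) = insert k (Finset.range k) := Finset.range_add_one
      have step : (∑ j ∈ Finset.range (k + 2), u j) + (c / (1 - c)) * u (k + 1)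
          = (∑ j ∈ Finset.range (k + 1), u j) + (1 / (1 - c)) * u (k + 1) := by
        rw [Finset.sum_range_succ]
        field_simp
        ring
      by_cases hkB : k ∈ B
      · -- break step
        have hcard1 : (B ∩ Finset.range (k + 1)).card = b + 1 := by
          rw [hrange, Finset.inter_insert_of_mem hkB,
            Finset.card_insert_of_notMem (by simp)]
        have hrec := hbad k hk2 hkB
        have hpt : u (k + 1) ≤ A (b + 1) := by
          rw [hA_rec]
          have : γ * u k ≤ γ * A b := mul_le_mul_of_nonneg_left ihp hγ0.le
          linarith
        rw [hcard1]
        refine ⟨hpt, ?_⟩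
        rw [step]
        have h1 : (1 / (1 - c)) * u (k + 1) ≤ (1 / (1 - c)) * (γ * u k + D) :=
          mul_le_mul_of_nonneg_left hrec (by positivity)
        have hsplit : (1 / (1 - c)) * (γ * u k + D)
            = (γ / (1 - c)) * u k + (1 / (1 - c)) * D := by ring
        have hid : (γ / (1 - c)) * u k - (c / (1 - c)) * u k = ((γ - c) / (1 - c)) * u k := by
          field_simp
        have h2 : ((γ - c) / (1 - c)) * u k ≤ ((γ - c) / (1 - c)) * A b :=
          mul_le_mul_of_nonneg_left ihp (div_nonneg (by linarith) h1c.le)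
        have h3 : ((γ - c) / (1 - c)) * A b ≤ (γ / (1 - c)) * A b := by
          apply mul_le_mul_of_nonneg_right _ (hA_nonneg b)
          apply (div_le_div_iff_of_pos_right h1c).mpr
          linarith
        have h4 : (γ / (1 - c)) * A b = P * (γ - 1) * A b := by
          rw [hP_def]; field_simp
        have h5 : (1 / (1 - c)) * D ≤ P * D := mul_le_mul_of_nonneg_right hP1 hD
        have h6 : P * A (b + 1) = γ * P * A b + P * D := by
          rw [hA_rec]; ring
        rw [h6]
        push_cast
        have h7 : P * (γ - 1) * A b = γ * P * A b - P * A b := by ring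
        linarith
      · -- good step
        have hcard1 : (B ∩ Finset.range (k + 1)).card = b := by
          rw [hrange, Finset.inter_insert_of_notMem hkB]
        have hrec := hgood k hk2 hkB
        have hpt : u (k + 1) ≤ A b := by
          have h1 : c * u k ≤ c * A b := mul_le_mul_of_nonneg_left ihp hc0
          have h2 : e ≤ (1 - c) * A b := by
            have h3 : (1 - c) * h ≤ (1 - c) * A b := by
              apply mul_le_mul_of_nonneg_left _ h1c.le
              have := hA_ge b
              have hu0 : 0 ≤ u 0 := hu 0
              linarith
            linarith [hhe]
          have h4 : c * A b + (1 - c) * A b = A b := by ring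
          linarith
        rw [hcard1]
        refine ⟨hpt, ?_⟩
        rw [step]
        have h1 : (1 / (1 - c)) * u (k + 1) ≤ (1 / (1 - c)) * (c * u k + e) :=
          mul_le_mul_of_nonneg_left hrec (by positivity)
        have h2 : (1 / (1 - c)) * (c * u k + e) = (c / (1 - c)) * u k + h := by
          rw [hh_def]; field_simp; try ring
        push_cast
        linarith
  -- conclude
  obtain ⟨_, hsum⟩ := main (N - 1) (by omega)
  have hN1 : N - 1 + 1 = N := by omega
  rw [hN1] at hsum
  have hBeq : B ∩ Finset.range (N - 1) = B := Finset.inter_eq_left.mpr hB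
  rw [hBeq] at hsum
  have hcu : 0 ≤ (c / (1 - c)) * u (N - 1) := mul_nonneg (div_nonneg hc0 h1c.le) (hu _)
  have hAle : A B.card ≤ γ ^ 𝕄 * (u 0 + h + D) := by
    have hpb : γ ^ B.card ≤ γ ^ 𝕄 := pow_le_pow_right₀ (by linarith) hcard
    have huh : (0:ℝ) ≤ u 0 + h := add_nonneg (hu 0) hh0
    have e1 : γ ^ B.card * (u 0 + h) ≤ γ ^ 𝕄 * (u 0 + h) :=
      mul_le_mul_of_nonneg_right hpb huh
    have hDinv : D / (γ - 1) ≤ D := div_le_self hD hγ1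
    have e2 : (γ ^ B.card - 1) * (D / (γ - 1)) ≤ γ ^ 𝕄 * D := by
      have hb1 := hpow1 B.card
      calc (γ ^ B.card - 1) * (D / (γ - 1)) ≤ γ ^ 𝕄 * (D / (γ - 1)) :=
            mul_le_mul_of_nonneg_right (by linarith) hDγ
        _ ≤ γ ^ 𝕄 * D := mul_le_mul_of_nonneg_left hDinv (by positivity)
    have hdist : γ ^ 𝕄 * (u 0 + h + D) = γ ^ 𝕄 * (u 0 + h) + γ ^ 𝕄 * D := by ring
    show γ ^ B.card * (u 0 + h) + (γ ^ B.card - 1) * (D / (γ - 1)) ≤ γ ^ 𝕄 * (u 0 + h + D)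
    rw [hdist]
    linarith
  have hfin : P * A B.card ≤ P * (γ ^ 𝕄 * (u 0 + h + D)) :=
    mul_le_mul_of_nonneg_left hAle hP0.le
  have hNcast : ((N - 1 : ℕ) : ℝ) + 1 = (N : ℝ) := by
    have : ((N - 1 : ℕ) : ℝ) = (N : ℝ) - 1 := by
      rw [Nat.cast_sub hN]; norm_num
    rw [this]; ring
  rw [hNcast] at hsum
  calc ∑ j ∈ Finset.range N, u j
      ≤ (∑ j ∈ Finset.range N, u j) + (c / (1 - c)) * u (N - 1) := by linarith
    _ ≤ P * A B.card + N * h := hsum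
    _ ≤ P * (γ ^ 𝕄 * (u 0 + h + D)) + N * h := by linarith

/-- Finite-gain l₁ stability of the Exp3-ISS switching algorithm: the horizon is
split into J episodes; within every episode the E-ISS certificate holds; every
non-Break episode (those not in B) has full length τ and passes the certificate
at its endpoint; Breaks happen at most 𝕄 times. -/
theorem finite_gain_l1_stability (n m : ℕ) (Lf Lπ κ β ρ wmax pibar0 γ α1 α2 α3 : ℝ)
    (τ T J 𝕄 : ℕ)
    (hLf : 1 ≤ Lf) (hLπ : 1 ≤ Lπ) (hκ : 1 ≤ κ) (hβ : 1 ≤ β)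
    (hρ0 : 0 < ρ) (hρ1 : ρ < 1) (hw : 0 ≤ wmax) (hpibar0 : 0 ≤ pibar0)
    (hτ : 1 ≤ τ) (hτρ : 2 * Real.sqrt 2 * κ * ρ ^ τ ≤ 1)
    (hγ : γ = Lf * (1 + Lπ) * κ)
    (hα1 : α1 = κ / ((1 - ρ) * (1 - κ * ρ ^ τ)))
    (hα2 : α2 = α1 * γ / (γ - 1))
    (hα3 : α3 = α2 * (γ / (1 - κ * ρ ^ τ) + Lf * (2 + Lπ)))
    (f : EuclideanSpace ℝ (Fin n) → EuclideanSpace ℝ (Fin m) → EuclideanSpace ℝ (Fin n)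
          → EuclideanSpace ℝ (Fin n))
    (hf : ∀ x u w x' u' w', ‖f x u w - f x' u' w'‖ ≤ Lf * (‖x - x'‖ + ‖u - u'‖ + ‖w - w'‖))
    (hf0 : f 0 0 0 = 0)
    (π : ℕ → EuclideanSpace ℝ (Fin n) → EuclideanSpace ℝ (Fin m))
    (hπ : ∀ t x y, ‖π t x - π t y‖ ≤ Lπ * ‖x - y‖) (hπ0 : ∀ t, ‖π t 0‖ ≤ pibar0)
    (x : ℕ → EuclideanSpace ℝ (Fin n)) (w : ℕ → EuclideanSpace ℝ (Fin n))
    (hwb : ∀ t, ‖w t‖ ≤ wmax)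
    (hdyn : ∀ t, t < T → x (t + 1) = f (x t) (π t (x t)) (w t))
    (hJ : 1 ≤ J) (t : ℕ → ℕ) (ht0 : t 0 = 0) (htJ : t J = T + 1)
    (hmono : ∀ j, j < J → t j < t (j + 1))
    (B : Finset ℕ) (hB : B ⊆ Finset.range (J - 1)) (hBcard : B.card ≤ 𝕄)
    (hcert : ∀ j, j < J → ∀ s, t j < s → s + 1 ≤ t (j + 1) →
        ‖x s‖ ≤ κ * ρ ^ (s - t j) * ‖x (t j)‖ + β * wmax)
    (hfull : ∀ j, j + 2 ≤ J → j ∉ B →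
        t (j + 1) - t j = τ ∧ ‖x (t (j + 1))‖ ≤ κ * ρ ^ τ * ‖x (t j)‖ + β * wmax) :
    ∑ s ∈ Finset.range (T + 1), ‖x s‖
      ≤ β * wmax * ((T : ℝ) + α1 * (J : ℝ)) + α2 * γ ^ 𝕄 * ‖x 0‖
        + α3 * γ ^ 𝕄 * (β * wmax + pibar0) := by
  -- basic constants
  have h1ρ : (0:ℝ) < 1 - ρ := by linarith
  set c : ℝ := κ * ρ ^ τ with hc_def
  have hρτ0 : 0 < ρ ^ τ := pow_pos hρ0 τ
  have hc0 : 0 < c := mul_pos (by linarith) hρτ0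
  have hsqrt2 : (1:ℝ) ≤ Real.sqrt 2 := by
    rw [show (1:ℝ) = Real.sqrt 1 from (Real.sqrt_one).symm]
    exact Real.sqrt_le_sqrt (by norm_num)
  have hτρ' : 2 * Real.sqrt 2 * c ≤ 1 := by rw [hc_def]; linarith [hτρ]
  have hc12 : c ≤ 1/2 := by nlinarith [mul_nonneg (by linarith : (0:ℝ) ≤ Real.sqrt 2 - 1) hc0.le]
  have h1c : (0:ℝ) < 1 - c := by linarith
  have hγ2 : (2:ℝ) ≤ γ := by
    rw [hγ]
    nlinarith [mul_nonneg (sub_nonneg.mpr hLf) (sub_nonneg.mpr hκ),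
      mul_nonneg (sub_nonneg.mpr hLπ) (sub_nonneg.mpr hκ),
      mul_nonneg (mul_nonneg (sub_nonneg.mpr hLf) (by linarith : (0:ℝ) ≤ 1 + Lπ)) (sub_nonneg.mpr hκ)]
  have hγ1 : (1:ℝ) ≤ γ - 1 := by linarith
  have hbw : (0:ℝ) ≤ β * wmax := mul_nonneg (by linarith) hw
  set D : ℝ := Lf * (2 + Lπ) * (β * wmax + pibar0) with hD_def
  have hD0 : 0 ≤ D := by
    rw [hD_def]
    exact mul_nonneg (mul_nonneg (by linarith) (by linarith)) (by linarith)
  -- final numeric inequality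
  have h1ρne : (1 - ρ) ≠ 0 := ne_of_gt h1ρ
  have h1cne : (1 - c) ≠ 0 := ne_of_gt h1c
  have hγ1ne : (γ - 1) ≠ 0 := by linarith
  have hQ1 : (1:ℝ) ≤ γ ^ 𝕄 := one_le_pow₀ (by linarith)
  have hQ0 : (0:ℝ) ≤ γ ^ 𝕄 := by linarith
  have hα11 : (1:ℝ) ≤ α1 := by
    rw [hα1, le_div_iff₀ (by positivity)]
    nlinarith [mul_nonneg h1ρ.le hc0.le]
  have hα21 : (1:ℝ) ≤ α2 := by
    rw [hα2, le_div_iff₀ (by linarith : (0:ℝ) < γ - 1)]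
    nlinarith [mul_le_mul_of_nonneg_right hα11 (by linarith : (0:ℝ) ≤ γ)]
  have hα2Q1 : (1:ℝ) ≤ α2 * γ ^ 𝕄 := by
    have := mul_le_mul hα21 hQ1 zero_le_one (by linarith : (0:ℝ) ≤ α2)
    simpa using this
  have hα2Q0 : (0:ℝ) ≤ α2 * γ ^ 𝕄 := by linarith
  have i1 : κ / (1 - ρ) * (γ / ((γ - 1) * (1 - c))) = α2 := by
    rw [hα2, hα1, hc_def]
    field_simp
  have i2 : κ / (1 - ρ) * ((β * wmax) / (1 - c)) = α1 * (β * wmax) := by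
    rw [hα1, hc_def]
    field_simp
    try ring
  have h'0 : (0:ℝ) ≤ (β * wmax) / (1 - c) := div_nonneg hbw h1c.le
  have hq : β * wmax ≤ (β * wmax) / (1 - c) := by
    rw [le_div_iff₀ h1c]
    nlinarith
  have hbw2 : 2 * ((β * wmax) / (1 - c)) ≤ γ * (β * wmax + pibar0) / (1 - c) := by
    have hnum : 2 * (β * wmax) ≤ γ * (β * wmax + pibar0) := by
      nlinarith [mul_nonneg (by linarith : (0:ℝ) ≤ γ - 2) hbw,
        mul_nonneg (by linarith : (0:ℝ) ≤ γ) hpibar0]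
    calc 2 * ((β * wmax) / (1 - c)) = (2 * (β * wmax)) / (1 - c) := by ring
      _ ≤ (γ * (β * wmax + pibar0)) / (1 - c) := (div_le_div_iff_of_pos_right h1c).mpr hnum
      _ = γ * (β * wmax + pibar0) / (1 - c) := by ring
  have t1 : α2 * γ ^ 𝕄 * (2 * ((β * wmax) / (1 - c)))
      ≤ α2 * γ ^ 𝕄 * (γ * (β * wmax + pibar0) / (1 - c)) :=
    mul_le_mul_of_nonneg_left hbw2 hα2Q0
  have t2 : β * wmax ≤ α2 * γ ^ 𝕄 * ((β * wmax) / (1 - c)) := by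
    calc β * wmax ≤ (β * wmax) / (1 - c) := hq
      _ = 1 * ((β * wmax) / (1 - c)) := (one_mul _).symm
      _ ≤ α2 * γ ^ 𝕄 * ((β * wmax) / (1 - c)) := mul_le_mul_of_nonneg_right hα2Q1 h'0
  have i3 : α3 * γ ^ 𝕄 * (β * wmax + pibar0)
      = α2 * γ ^ 𝕄 * (γ * (β * wmax + pibar0) / (1 - c)) + α2 * γ ^ 𝕄 * D := by
    rw [hα3, hD_def, hc_def]
    field_simp
  -- monotonicity of episode boundaries
  have htle : ∀ jj, jj ≤ J → ∀ i, i ≤ jj → t i ≤ t jj := by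
    intro jj
    induction jj with
    | zero => intro _ i hi; interval_cases i; exact le_rfl
    | succ k ih =>
      intro hk i hi
      rcases Nat.eq_or_lt_of_le hi with h | h
      · rw [h]
      · have h1 : t i ≤ t k := ih (by omega) i (by omega)
        have h2 := hmono k (by omega)
        omega
  have htT : ∀ j, j + 2 ≤ J → t (j + 1) ≤ T := by
    intro j hj
    have h1 := hmono (j + 1) (by omega)
    have h2 := htle J le_rfl (j + 1 + 1) (by omega)
    omega
  -- within-episode crude bound
  have hxbound : ∀ j, j < J → ∀ s, t j ≤ s → s + 1 ≤ t (j + 1) →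
      ‖x s‖ ≤ κ * ‖x (t j)‖ + β * wmax := by
    intro j hj s hs hs1
    rcases eq_or_lt_of_le hs with h | h
    · rw [← h]
      nlinarith [norm_nonneg (x (t j)), mul_nonneg (sub_nonneg.mpr hκ) (norm_nonneg (x (t j)))]
    · have h1 := hcert j hj s h hs1
      have hp1 : ρ ^ (s - t j) ≤ 1 := pow_le_one₀ hρ0.le hρ1.le
      have hp0 : 0 ≤ ρ ^ (s - t j) := pow_nonneg hρ0.le _
      have h2 : κ * ρ ^ (s - t j) * ‖x (t j)‖ ≤ κ * ‖x (t j)‖ := by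
        nlinarith [norm_nonneg (x (t j)), mul_nonneg (by linarith : (0:ℝ) ≤ κ) (norm_nonneg (x (t j)))]
      linarith
  -- episode-endpoint recursions
  have hbadrec : ∀ j, j + 2 ≤ J → ‖x (t (j + 1))‖ ≤ γ * ‖x (t j)‖ + D := by
    intro j hj
    have hjJ : j < J := by omega
    have hlt := hmono j hjJ
    set s := t (j + 1) - 1 with hs_def
    have hs1 : s + 1 = t (j + 1) := by omega
    have hsT : s < T := by have := htT j hj; omega
    have hxs : ‖x s‖ ≤ κ * ‖x (t j)‖ + β * wmax := hxbound j hjJ s (by omega) (by omega)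
    have hdx : x (s + 1) = f (x s) (π s (x s)) (w s) := hdyn s hsT
    have hfb : ‖x (s + 1)‖ ≤ Lf * (‖x s‖ + ‖π s (x s)‖ + ‖w s‖) := by
      rw [hdx]
      have h1 := hf (x s) (π s (x s)) (w s) 0 0 0
      rw [hf0] at h1
      simpa using h1
    have hpb : ‖π s (x s)‖ ≤ Lπ * ‖x s‖ + pibar0 := by
      have h1 := hπ s (x s) 0
      rw [sub_zero] at h1
      calc ‖π s (x s)‖ = ‖(π s (x s) - π s 0) + π s 0‖ := by rw [sub_add_cancel]
        _ ≤ ‖π s (x s) - π s 0‖ + ‖π s 0‖ := norm_add_le _ _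
        _ ≤ Lπ * ‖x s‖ + pibar0 := add_le_add h1 (hπ0 s)
    have hws := hwb s
    have hLf0 : (0:ℝ) ≤ Lf := by linarith
    have h2 : ‖x s‖ + ‖π s (x s)‖ + ‖w s‖ ≤ (1 + Lπ) * ‖x s‖ + pibar0 + wmax := by linarith
    have h3 : Lf * (‖x s‖ + ‖π s (x s)‖ + ‖w s‖)
        ≤ Lf * ((1 + Lπ) * ‖x s‖ + pibar0 + wmax) := mul_le_mul_of_nonneg_left h2 hLf0
    have h4 : Lf * ((1 + Lπ) * ‖x s‖ + pibar0 + wmax)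
        ≤ Lf * ((1 + Lπ) * (κ * ‖x (t j)‖ + β * wmax) + pibar0 + wmax) := by
      apply mul_le_mul_of_nonneg_left _ hLf0
      have := mul_le_mul_of_nonneg_left hxs (by linarith : (0:ℝ) ≤ 1 + Lπ)
      linarith
    have h5 : Lf * ((1 + Lπ) * (κ * ‖x (t j)‖ + β * wmax) + pibar0 + wmax)
        ≤ γ * ‖x (t j)‖ + D := by
      rw [hγ, hD_def]
      nlinarith [mul_nonneg hLf0 (mul_nonneg (sub_nonneg.mpr hβ) hw),
        mul_nonneg (mul_nonneg hLf0 (by linarith : (0:ℝ) ≤ 1 + Lπ)) hpibar0,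
        norm_nonneg (x (t j))]
    calc ‖x (t (j + 1))‖ = ‖x (s + 1)‖ := by rw [hs1]
      _ ≤ Lf * (‖x s‖ + ‖π s (x s)‖ + ‖w s‖) := hfb
      _ ≤ γ * ‖x (t j)‖ + D := by linarith
  have hgoodrec : ∀ j, j + 2 ≤ J → j ∉ B → ‖x (t (j + 1))‖ ≤ c * ‖x (t j)‖ + β * wmax :=
    fun j hj hnb => (hfull j hj hnb).2
  -- apply the key summation lemma
  have hkey := key_sum (fun j => ‖x (t j)‖) (fun j => norm_nonneg _) J hJ c γ (β * wmax) D
    hc0.le hc12 hγ2 hbw hD0 B 𝕄 hB hBcard hgoodrec (fun j hj _ => hbadrec j hj)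
  simp only [ht0] at hkey
  -- decomposition of the horizon into episodes
  have decomp : ∀ k, k ≤ J →
      (∑ j ∈ Finset.range k, ∑ s ∈ Finset.Ico (t j) (t (j + 1)), ‖x s‖)
        = ∑ s ∈ Finset.Ico 0 (t k), ‖x s‖ := by
    intro k
    induction k with
    | zero => intro _; simp [ht0]
    | succ k ih =>
      intro hk
      rw [Finset.sum_range_succ, ih (by omega)]
      exact Finset.sum_Ico_consecutive _ (Nat.zero_le _) (le_of_lt (hmono k (by omega)))
  -- per-episode sum bound
  have episode : ∀ j, j < J →
      ∑ s ∈ Finset.Ico (t j) (t (j + 1)), ‖x s‖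
        ≤ (κ / (1 - ρ)) * ‖x (t j)‖ + (((t (j + 1) : ℝ)) - ((t j : ℝ))) * (β * wmax) := by
    intro j hj
    have hlt := hmono j hj
    rw [Finset.sum_Ico_eq_sum_range]
    have hterm : ∀ i ∈ Finset.range (t (j + 1) - t j),
        ‖x (t j + i)‖ ≤ (κ * ‖x (t j)‖) * ρ ^ i + β * wmax := by
      intro i hi
      rw [Finset.mem_range] at hi
      rcases Nat.eq_zero_or_pos i with h0 | hpos
      · subst h0
        simp only [Nat.add_zero, pow_zero, mul_one]
        nlinarith [norm_nonneg (x (t j)), mul_nonneg (sub_nonneg.mpr hκ) (norm_nonneg (x (t j)))]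
      · have hc := hcert j hj (t j + i) (by omega) (by omega)
        rw [Nat.add_sub_cancel_left] at hc
        have : κ * ρ ^ i * ‖x (t j)‖ = (κ * ‖x (t j)‖) * ρ ^ i := by ring
        linarith
    calc ∑ i ∈ Finset.range (t (j + 1) - t j), ‖x (t j + i)‖
        ≤ ∑ i ∈ Finset.range (t (j + 1) - t j), ((κ * ‖x (t j)‖) * ρ ^ i + β * wmax) :=
          Finset.sum_le_sum hterm
      _ = (κ * ‖x (t j)‖) * (∑ i ∈ Finset.range (t (j + 1) - t j), ρ ^ i)
            + ((t (j + 1) - t j : ℕ) : ℝ) * (β * wmax) := by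
          rw [Finset.sum_add_distrib, ← Finset.mul_sum, Finset.sum_const, Finset.card_range,
            nsmul_eq_mul]
      _ ≤ (κ * ‖x (t j)‖) * (1 / (1 - ρ)) + ((t (j + 1) - t j : ℕ) : ℝ) * (β * wmax) := by
          have hg := geom_aux hρ0.le hρ1 (t (j + 1) - t j)
          have hka : 0 ≤ κ * ‖x (t j)‖ := mul_nonneg (by linarith) (norm_nonneg _)
          nlinarith
      _ = (κ / (1 - ρ)) * ‖x (t j)‖ + (((t (j + 1) : ℝ)) - ((t j : ℝ))) * (β * wmax) := by
          rw [Nat.cast_sub (le_of_lt hlt)]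
          field_simp
          try ring
  -- assemble
  have h0 : ∑ s ∈ Finset.range (T + 1), ‖x s‖
      = ∑ j ∈ Finset.range J, ∑ s ∈ Finset.Ico (t j) (t (j + 1)), ‖x s‖ := by
    rw [decomp J le_rfl, htJ, Finset.range_eq_Ico]
  have hsum1 : ∑ s ∈ Finset.range (T + 1), ‖x s‖
      ≤ (κ / (1 - ρ)) * (∑ j ∈ Finset.range J, ‖x (t j)‖) + ((T : ℝ) + 1) * (β * wmax) := by
    rw [h0]
    calc ∑ j ∈ Finset.range J, ∑ s ∈ Finset.Ico (t j) (t (j + 1)), ‖x s‖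
        ≤ ∑ j ∈ Finset.range J,
            ((κ / (1 - ρ)) * ‖x (t j)‖ + (((t (j + 1) : ℝ)) - ((t j : ℝ))) * (β * wmax)) :=
          Finset.sum_le_sum (fun j hj => episode j (Finset.mem_range.mp hj))
      _ = (κ / (1 - ρ)) * (∑ j ∈ Finset.range J, ‖x (t j)‖)
            + (∑ j ∈ Finset.range J, (((t (j + 1) : ℝ)) - ((t j : ℝ)))) * (β * wmax) := by
          rw [Finset.sum_add_distrib, ← Finset.mul_sum, ← Finset.sum_mul]
      _ = (κ / (1 - ρ)) * (∑ j ∈ Finset.range J, ‖x (t j)‖) + ((T : ℝ) + 1) * (β * wmax) := by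
          rw [Finset.sum_range_sub (fun j => ((t j : ℝ)))]
          rw [htJ, ht0]
          push_cast
          ring
  have hκ1ρ : (0:ℝ) ≤ κ / (1 - ρ) := div_nonneg (by linarith) h1ρ.le
  have hsum2 : ∑ s ∈ Finset.range (T + 1), ‖x s‖
      ≤ (κ / (1 - ρ)) * (γ / ((γ - 1) * (1 - c)) * (γ ^ 𝕄 * (‖x 0‖ + (β * wmax) / (1 - c) + D))
          + (J : ℝ) * ((β * wmax) / (1 - c))) + ((T : ℝ) + 1) * (β * wmax) := by
    have := mul_le_mul_of_nonneg_left hkey hκ1ρ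
    linarith
  calc ∑ s ∈ Finset.range (T + 1), ‖x s‖
      ≤ (κ / (1 - ρ)) * (γ / ((γ - 1) * (1 - c)) * (γ ^ 𝕄 * (‖x 0‖ + (β * wmax) / (1 - c) + D))
          + (J : ℝ) * ((β * wmax) / (1 - c))) + ((T : ℝ) + 1) * (β * wmax) := hsum2
    _ = (κ / (1 - ρ) * (γ / ((γ - 1) * (1 - c)))) * γ ^ 𝕄 * ‖x 0‖
          + (κ / (1 - ρ) * (γ / ((γ - 1) * (1 - c)))) * γ ^ 𝕄 * ((β * wmax) / (1 - c))
          + (κ / (1 - ρ) * (γ / ((γ - 1) * (1 - c)))) * γ ^ 𝕄 * D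
          + (κ / (1 - ρ) * ((β * wmax) / (1 - c))) * (J : ℝ)
          + (T : ℝ) * (β * wmax) + β * wmax := by ring
    _ = α2 * γ ^ 𝕄 * ‖x 0‖ + α2 * γ ^ 𝕄 * ((β * wmax) / (1 - c)) + α2 * γ ^ 𝕄 * D
          + α1 * (β * wmax) * (J : ℝ) + (T : ℝ) * (β * wmax) + β * wmax := by
        rw [i1, i2]
    _ ≤ α2 * γ ^ 𝕄 * ‖x 0‖ + α2 * γ ^ 𝕄 * (γ * (β * wmax + pibar0) / (1 - c)) + α2 * γ ^ 𝕄 * D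
          + α1 * (β * wmax) * (J : ℝ) + (T : ℝ) * (β * wmax) := by
        linarith
    _ = β * wmax * ((T : ℝ) + α1 * (J : ℝ)) + α2 * γ ^ 𝕄 * ‖x 0‖
          + α3 * γ ^ 𝕄 * (β * wmax + pibar0) := by
        rw [i3]
        ring
end

section
/- Let L_f ≥ 1, L_π ≥ 1, κ ≥ 1, 0 < ρ < 1 and an integer τ ≥ 1 with 2√2·κ·ρ^τ ≤ 1 be given, and set γ := L_f(1+L_π)κ. There exist constants C₁, C₂, C₃ > 0, depending only on (L_f, L_π, κ, ρ, τ), such that the following holds for all β ≥ 1, w_max ≥ 0, π̄0 ≥ 0, all natural numbers n, m, T, J ≥ 1, 𝕄, and all data as follows. Let f : ℝ^n × ℝ^m × ℝ^n → ℝ^n satisfy ‖f(x,u,w) − f(x',u',w')‖ ≤ L_f(‖x−x'‖+‖u−u'‖+‖w−w'‖) and f(0,0,0) = 0; for each t let π_t : ℝ^n → ℝ^m be L_π-Lipschitz with ‖π_t(0)‖ ≤ π̄0; let ‖w_t‖ ≤ w_max and x_{t+1} = f(x_t, π_t(x_t), w_t) for 0 ≤ t ≤ T−1; and suppose there are episode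 boundaries 0 = t_0 < t_1 < ⋯ < t_J = T+1 and a set B ⊆ {0,…,J−2} with |B| ≤ 𝕄 such that (i) for every 0 ≤ j ≤ J−1 and every t with t_j < t ≤ t_{j+1}−1, ‖x_t‖ ≤ κ ρ^{t−t_j}‖x_{t_j}‖ + β w_max, and (ii) for every j ∈ {0,…,J−2} ∖ B, t_{j+1} − t_j = τ and ‖x_{t_{j+1}}‖ ≤ κ ρ^{τ}‖x_{t_j}‖ + β w_max. Then Σ_{t=0}^{T} ‖x_t‖² ≤ 2β² w_max² (T + C₁ J) + C₂ γ^{2𝕄} ‖x_0‖² + C₃ γ^{2𝕄} (β² w_max² + π̄0²). -/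
/-- Number of "good" steps since the last bad step before `k`. -/
def fgEpLam (bad : ℕ → Bool) : ℕ → ℕ
  | 0 => 0
  | k+1 => if bad k then 0 else fgEpLam bad k + 1

/-- Number of bad steps among `0, …, k-1`. -/
def fgEpB (bad : ℕ → Bool) : ℕ → ℕ
  | 0 => 0
  | k+1 => fgEpB bad k + (if bad k then 1 else 0)

lemma fgEpB_eq (bad : ℕ → Bool) :
    ∀ k, fgEpB bad k = ((Finset.range k).filter (fun j => bad j = true)).card := by
  intro k
  induction k with
  | zero => simp [fgEpB]
  | succ k ih =>
    rw [Finset.range_add_one, Finset.filter_insert]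
    by_cases h : bad k = true
    · rw [if_pos h, Finset.card_insert_of_notMem (by simp)]
      simp [fgEpB, h, ih]
    · simp [fgEpB, h, ih]

lemma fgEpB_le_card (B : Finset ℕ) (k : ℕ) :
    fgEpB (fun j => decide (j ∈ B)) k ≤ B.card := by
  rw [fgEpB_eq]
  apply Finset.card_le_card
  intro j hj
  simpa using (Finset.mem_filter.mp hj).2

lemma fg_geom (r : ℝ) (h0 : 0 ≤ r) (h1 : r < 1) (n : ℕ) :
    ∑ i ∈ Finset.range n, r ^ i ≤ 1 / (1 - r) := by
  have h : (0:ℝ) < 1 - r := by linarith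
  rw [geom_sum_eq (by linarith : r ≠ 1)]
  have heq : (r ^ n - 1) / (r - 1) = (1 - r ^ n) / (1 - r) := by
    rw [← neg_div_neg_eq]; ring_nf
  rw [heq]
  have : r ^ n ≥ 0 := pow_nonneg h0 n
  gcongr
  linarith

lemma fg_sumZ (γ : ℝ) (bad : ℕ → Bool) (hγ : 2 ≤ γ) :
    ∀ k, ∑ j ∈ Finset.range (k+1),
        (γ ^ fgEpB bad j * (1/2:ℝ) ^ fgEpLam bad j)^2
      ≤ (γ ^ fgEpB bad k)^2 * (16/9 - (1/3) * ((1/2:ℝ) ^ fgEpLam bad k)^2) := by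
  intro k
  induction k with
  | zero => norm_num [fgEpB, fgEpLam]
  | succ k ih =>
    rw [Finset.sum_range_succ]
    set P := γ ^ fgEpB bad k with hP
    set Q := (1/2:ℝ) ^ fgEpLam bad k with hQ
    have hP1 : (1:ℝ) ≤ P := one_le_pow₀ (by linarith)
    have hQ0 : (0:ℝ) ≤ Q := by positivity
    have hQ1 : Q ≤ 1 := pow_le_one₀ (by norm_num) (by norm_num)
    by_cases h : bad k = true
    · have hB : fgEpB bad (k+1) = fgEpB bad k + 1 := by simp [fgEpB, h]
      have hL : fgEpLam bad (k+1) = 0 := by simp [fgEpLam, h]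
      have hgs : γ ^ (fgEpB bad k + 1) = P * γ := by rw [hP, pow_succ]
      rw [hB, hL, hgs]
      have hγ4 : (4:ℝ) ≤ γ^2 := by nlinarith
      have h44 : 4 * P^2 ≤ P^2 * γ^2 := by nlinarith [sq_nonneg P]
      simp only [pow_zero, mul_one, one_pow]
      nlinarith [sq_nonneg Q, sq_nonneg P]
    · have hB : fgEpB bad (k+1) = fgEpB bad k := by simp [fgEpB, h]
      have hL : fgEpLam bad (k+1) = fgEpLam bad k + 1 := by simp [fgEpLam, h]
      have hqs : (1/2:ℝ) ^ (fgEpLam bad k + 1) = Q * (1/2) := by rw [hQ, pow_succ]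
      rw [hB, hL, hqs]
      nlinarith [sq_nonneg P, sq_nonneg Q, sq_nonneg (P*Q)]

lemma fg_chain_A (γ c e : ℝ) (bad : ℕ → Bool) (a : ℕ → ℝ) (K : ℕ)
    (hγ : 2 ≤ γ) (hc : 0 ≤ c) (he : 0 ≤ e) (ha0 : 0 ≤ a 0)
    (hstep : ∀ k, k < K →
      if bad k then a (k+1) ≤ γ * a k + e else a (k+1) ≤ (1/2) * a k + c) :
    ∀ k, k ≤ K → a k ≤ γ ^ fgEpB bad k * (1/2:ℝ) ^ fgEpLam bad k *
      (a 0 + (2*c+e) * (2 - 2 * (1/2:ℝ) ^ fgEpB bad k)) + 2*c := by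
  intro k
  induction k with
  | zero => intro _; norm_num [fgEpB, fgEpLam]; linarith
  | succ k ih =>
    intro hkK
    have hk : k < K := by omega
    have IH := ih (by omega)
    set P := γ ^ fgEpB bad k with hP
    set Q := (1/2:ℝ) ^ fgEpLam bad k with hQ
    set S := (1/2:ℝ) ^ fgEpB bad k with hS
    have hP1 : (1:ℝ) ≤ P := one_le_pow₀ (by linarith)
    have hQ0 : (0:ℝ) ≤ Q := by positivity
    have hQ1 : Q ≤ 1 := pow_le_one₀ (by norm_num) (by norm_num)
    have hS0 : (0:ℝ) ≤ S := by positivity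
    have hS1 : S ≤ 1 := pow_le_one₀ (by norm_num) (by norm_num)
    have hR0 : 0 ≤ a 0 + (2*c+e) * (2 - 2*S) := by nlinarith
    have hPS : 1 ≤ P * S := by
      rw [hP, hS, ← mul_pow]
      exact one_le_pow₀ (by linarith)
    have hstepk := hstep k hk
    by_cases h : bad k = true
    · have hB : fgEpB bad (k+1) = fgEpB bad k + 1 := by simp [fgEpB, h]
      have hL : fgEpLam bad (k+1) = 0 := by simp [fgEpLam, h]
      have hgs : γ ^ (fgEpB bad k + 1) = P * γ := by rw [hP, pow_succ]
      have hss : (1/2:ℝ) ^ (fgEpB bad k + 1) = S * (1/2) := by rw [hS, pow_succ]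
      rw [hB, hL, hgs, hss, pow_zero]
      rw [if_pos h] at hstepk
      have h3 : γ * a k ≤ γ * (P*Q*(a 0 + (2*c+e) * (2 - 2*S)) + 2*c) :=
        mul_le_mul_of_nonneg_left IH (by linarith)
      have hP0 : (0:ℝ) ≤ P := by linarith
      have h4 : P*Q*(a 0 + (2*c+e) * (2 - 2*S)) ≤ P*(a 0 + (2*c+e) * (2 - 2*S)) := by
        nlinarith [mul_nonneg (mul_nonneg (by linarith : (0:ℝ) ≤ 1 - Q) hP0) hR0]
      have h5 : γ*(2*c+e) ≤ γ*(2*c+e)*(P*S) := by nlinarith [mul_nonneg (by linarith : (0:ℝ) ≤ γ) (by linarith : (0:ℝ) ≤ 2*c+e)]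
      have h6 : e ≤ γ * e := by nlinarith
      have h7 := mul_le_mul_of_nonneg_left h4 (by linarith : (0:ℝ) ≤ γ)
      linarith [hstepk, h3, h7, h5, h6]
    · have hB : fgEpB bad (k+1) = fgEpB bad k := by simp [fgEpB, h]
      have hL : fgEpLam bad (k+1) = fgEpLam bad k + 1 := by simp [fgEpLam, h]
      have hqs : (1/2:ℝ) ^ (fgEpLam bad k + 1) = Q * (1/2) := by rw [hQ, pow_succ]
      rw [hB, hL, hqs]
      rw [if_neg h] at hstepk
      linarith [IH, hstepk]

lemma fg_chain_sum (γ c e : ℝ) (bad : ℕ → Bool) (a : ℕ → ℝ) (K 𝕄 : ℕ)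
    (hγ : 2 ≤ γ) (hc : 0 ≤ c) (he : 0 ≤ e) (ha : ∀ k, 0 ≤ a k)
    (hstep : ∀ k, k < K →
      if bad k then a (k+1) ≤ γ * a k + e else a (k+1) ≤ (1/2) * a k + c)
    (hM : fgEpB bad K ≤ 𝕄) :
    ∑ j ∈ Finset.range (K+1), (a j)^2
      ≤ 32/9 * γ^(2*𝕄) * (a 0 + (2*c+e)*2)^2 + 8*c^2*((K:ℝ)+1) := by
  have hγ0 : (0:ℝ) ≤ γ := by linarith
  set Rm := a 0 + (2*c+e)*2 with hRm
  have hRm0 : 0 ≤ Rm := by have := ha 0; positivity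
  -- pointwise bound on squares
  have key : ∀ j, j ≤ K → (a j)^2
      ≤ 2 * (γ ^ fgEpB bad j * (1/2:ℝ) ^ fgEpLam bad j)^2 * Rm^2 + 8*c^2 := by
    intro j hj
    have hA := fg_chain_A γ c e bad a K hγ hc he (ha 0) hstep j hj
    set P := γ ^ fgEpB bad j with hP
    set Q := (1/2:ℝ) ^ fgEpLam bad j with hQ
    set S := (1/2:ℝ) ^ fgEpB bad j with hS
    have hP0 : (0:ℝ) ≤ P := by positivity
    have hQ0 : (0:ℝ) ≤ Q := by positivity
    have hS0 : (0:ℝ) ≤ S := by positivity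
    have hS1 : S ≤ 1 := pow_le_one₀ (by norm_num) (by norm_num)
    have h1 : a j ≤ P * Q * Rm + 2*c := by
      have : a 0 + (2*c+e) * (2 - 2*S) ≤ Rm := by nlinarith
      nlinarith [mul_nonneg hP0 hQ0]
    have h2 : (a j)^2 ≤ (P*Q*Rm + 2*c)^2 := by
      have h0 := ha j
      nlinarith [mul_nonneg (mul_nonneg hP0 hQ0) hRm0]
    nlinarith [sq_nonneg (P*Q*Rm - 2*c)]
  calc ∑ j ∈ Finset.range (K+1), (a j)^2
      ≤ ∑ j ∈ Finset.range (K+1),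
          (2 * (γ ^ fgEpB bad j * (1/2:ℝ) ^ fgEpLam bad j)^2 * Rm^2 + 8*c^2) := by
        apply Finset.sum_le_sum
        intro j hj
        exact key j (by simpa using Nat.lt_succ_iff.mp (Finset.mem_range.mp hj))
    _ = 2 * Rm^2 * (∑ j ∈ Finset.range (K+1),
          (γ ^ fgEpB bad j * (1/2:ℝ) ^ fgEpLam bad j)^2) + 8*c^2*((K:ℝ)+1) := by
        rw [Finset.sum_add_distrib, Finset.sum_const, Finset.card_range]
        rw [show ∀ y:ℝ, (K+1) • y = ((K:ℝ)+1) * y from fun y => by push_cast [nsmul_eq_mul]; ring]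
        rw [Finset.sum_congr rfl (fun j _ => by ring :
          ∀ j ∈ Finset.range (K+1), 2 * (γ ^ fgEpB bad j * (1/2:ℝ) ^ fgEpLam bad j)^2 * Rm^2
            = (2*Rm^2) * (γ ^ fgEpB bad j * (1/2:ℝ) ^ fgEpLam bad j)^2), ← Finset.mul_sum]
        ring
    _ ≤ 32/9 * γ^(2*𝕄) * Rm^2 + 8*c^2*((K:ℝ)+1) := by
        have hZ := fg_sumZ γ bad hγ K
        have hQK0 : (0:ℝ) ≤ ((1/2:ℝ) ^ fgEpLam bad K)^2 := by positivity
        have hPK : (γ ^ fgEpB bad K)^2 ≤ γ^(2*𝕄) := by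
          rw [← pow_mul]
          exact pow_le_pow_right₀ (by linarith) (by omega)
        have hsum : (∑ j ∈ Finset.range (K+1),
            (γ ^ fgEpB bad j * (1/2:ℝ) ^ fgEpLam bad j)^2) ≤ 16/9 * γ^(2*𝕄) := by
          calc _ ≤ (γ ^ fgEpB bad K)^2 * (16/9 - (1/3) * ((1/2:ℝ) ^ fgEpLam bad K)^2) := hZ
            _ ≤ (γ ^ fgEpB bad K)^2 * (16/9) := by
                apply mul_le_mul_of_nonneg_left _ (by positivity)
                linarith
            _ ≤ 16/9 * γ^(2*𝕄) := by linarith [hPK]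
        nlinarith [sq_nonneg Rm]

lemma fg_partition (f : ℕ → ℝ) (t : ℕ → ℕ) :
    ∀ J, (∀ j, j < J → t j ≤ t (j+1)) →
    ∑ j ∈ Finset.range J, ∑ s ∈ Finset.Ico (t j) (t (j+1)), f s
      = ∑ s ∈ Finset.Ico (t 0) (t J), f s := by
  intro J
  induction J with
  | zero => simp
  | succ J ih =>
    intro h
    have h0J : t 0 ≤ t J := by
      clear ih
      induction J with
      | zero => exact le_refl _
      | succ J ih2 => exact le_trans (ih2 (fun j hj => h j (by omega))) (h J (by omega))
    rw [Finset.sum_range_succ, ih (fun j hj => h j (by omega)),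
      Finset.sum_Ico_consecutive _ h0J (h J (by omega))]


lemma fg_Rm_bound (X c pi γ : ℝ) (hX : 0 ≤ X) (hc : 0 ≤ c) (hpi : 0 ≤ pi) (hγ : 0 ≤ γ) :
    (X + (2*c + γ*(2*c+pi))*2)^2 ≤ 3*X^2 + (48+96*γ^2)*c^2 + 24*γ^2*pi^2 := by
  nlinarith [sq_nonneg (X - 4*c), sq_nonneg (4*c - 2*(γ*(2*c+pi))),
    sq_nonneg (2*(γ*(2*c+pi)) - X), mul_nonneg (sq_nonneg γ) (sq_nonneg (2*c - pi)),
    mul_nonneg hc hpi, mul_nonneg (mul_nonneg hγ hc) hpi, sq_nonneg (2*c - pi)]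

lemma fg_final (P G c pi X T J γ : ℝ) (hP : 0 < P) (hG : 1 ≤ G) (hJ : 1 ≤ J)
    (hc : 0 ≤ c) (hpi : 0 ≤ pi) (hX : 0 ≤ X) (hT : 0 ≤ T) :
    2*P * (32/9 * G * (3*X^2 + (48+96*γ^2)*c^2 + 24*γ^2*pi^2) + 8*c^2*J) + 2*c^2*(T+1)
      ≤ 2*c^2*(T + (1+8*P)*J) + 64/3*P*G*X^2 + 64/9*P*(48+120*γ^2)*G*(c^2+pi^2) := by
  have hPG : (0:ℝ) ≤ P*G := by nlinarith
  nlinarith [mul_nonneg (mul_nonneg hPG (sq_nonneg γ)) (sq_nonneg c),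
    mul_nonneg hPG (sq_nonneg pi),
    mul_nonneg (mul_nonneg hPG (sq_nonneg γ)) (sq_nonneg pi),
    mul_nonneg (sq_nonneg c) (by linarith : (0:ℝ) ≤ J - 1),
    mul_nonneg hPG (sq_nonneg c)]


set_option maxHeartbeats 1000000 in

/-- Finite-gain l₂ stability of the Exp3-ISS switching algorithm: there exist
constants depending only on (L_f, L_π, κ, ρ, τ) bounding the sum of squared
state norms, with γ = L_f(1+L_π)κ. -/
theorem finite_gain_l2_stability (Lf Lπ κ ρ γ : ℝ) (τ : ℕ)
    (hLf : 1 ≤ Lf) (hLπ : 1 ≤ Lπ) (hκ : 1 ≤ κ) (hρ0 : 0 < ρ) (hρ1 : ρ < 1)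
    (hτ : 1 ≤ τ) (hτρ : 2 * Real.sqrt 2 * κ * ρ ^ τ ≤ 1)
    (hγ : γ = Lf * (1 + Lπ) * κ) :
    ∃ C₁ C₂ C₃ : ℝ, 0 < C₁ ∧ 0 < C₂ ∧ 0 < C₃ ∧
      ∀ (β wmax pibar0 : ℝ) (n m T J 𝕄 : ℕ)
        (f : EuclideanSpace ℝ (Fin n) → EuclideanSpace ℝ (Fin m)
              → EuclideanSpace ℝ (Fin n) → EuclideanSpace ℝ (Fin n))
        (π : ℕ → EuclideanSpace ℝ (Fin n) → EuclideanSpace ℝ (Fin m))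
        (x : ℕ → EuclideanSpace ℝ (Fin n)) (w : ℕ → EuclideanSpace ℝ (Fin n))
        (t : ℕ → ℕ) (B : Finset ℕ),
        1 ≤ β → 0 ≤ wmax → 0 ≤ pibar0 → 1 ≤ J →
        (∀ x u w x' u' w', ‖f x u w - f x' u' w'‖
            ≤ Lf * (‖x - x'‖ + ‖u - u'‖ + ‖w - w'‖)) →
        f 0 0 0 = 0 →
        (∀ s x y, ‖π s x - π s y‖ ≤ Lπ * ‖x - y‖) →
        (∀ s, ‖π s 0‖ ≤ pibar0) →
        (∀ s, ‖w s‖ ≤ wmax) →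
        (∀ s, s < T → x (s + 1) = f (x s) (π s (x s)) (w s)) →
        t 0 = 0 → t J = T + 1 →
        (∀ j, j < J → t j < t (j + 1)) →
        B ⊆ Finset.range (J - 1) → B.card ≤ 𝕄 →
        (∀ j, j < J → ∀ s, t j < s → s + 1 ≤ t (j + 1) →
            ‖x s‖ ≤ κ * ρ ^ (s - t j) * ‖x (t j)‖ + β * wmax) →
        (∀ j, j + 2 ≤ J → j ∉ B →
            t (j + 1) - t j = τ ∧
            ‖x (t (j + 1))‖ ≤ κ * ρ ^ τ * ‖x (t j)‖ + β * wmax) →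
        ∑ s ∈ Finset.range (T + 1), ‖x s‖ ^ 2
          ≤ 2 * β ^ 2 * wmax ^ 2 * ((T : ℝ) + C₁ * (J : ℝ))
            + C₂ * γ ^ (2 * 𝕄) * ‖x 0‖ ^ 2
            + C₃ * γ ^ (2 * 𝕄) * (β ^ 2 * wmax ^ 2 + pibar0 ^ 2) := by
  have hρ2 : (0:ℝ) < 1 - ρ^2 := by nlinarith
  have hκ0 : (0:ℝ) < κ := by linarith
  have hLL : (2:ℝ) ≤ Lf * (1 + Lπ) := by nlinarith
  have hγ2 : (2:ℝ) ≤ γ := by rw [hγ]; nlinarith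
  have hγ0 : (0:ℝ) ≤ γ := by linarith
  refine ⟨1 + 8*κ^2*(1-ρ^2)⁻¹, 64/3*κ^2*(1-ρ^2)⁻¹,
    64/9*κ^2*(1-ρ^2)⁻¹*(48+120*γ^2), ?_, ?_, ?_, ?_⟩
  · positivity
  · positivity
  · positivity
  intro β wmax pibar0 n m T J 𝕄 f π x w t B hβ hw hpi0 hJ hf hf0 hπ hπ0 hwb
    hdyn ht0 htJ htlt hBsub hBcard hEp hGood
  set c := β * wmax with hcdef
  have hc : 0 ≤ c := by nlinarith
  have hwc : wmax ≤ c := by nlinarith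
  clear_value c
  set e := γ * (2*c + pibar0) with hedef
  have he : 0 ≤ e := by rw [hedef]; exact mul_nonneg hγ0 (by linarith)
  clear_value e
  -- κ ρ^τ ≤ 1/2
  have hκρτ : κ * ρ^τ ≤ 1/2 := by
    have hs2 : (1:ℝ) ≤ Real.sqrt 2 := by
      nlinarith [Real.sq_sqrt (by norm_num : (0:ℝ) ≤ 2), Real.sqrt_nonneg 2]
    have hx : (0:ℝ) ≤ κ * ρ^τ := by positivity
    nlinarith
  -- strict monotonicity of t
  have hlt : ∀ j, j ≤ J → ∀ i, i < j → t i < t j := by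
    intro j
    induction j with
    | zero => omega
    | succ j ih =>
      intro hj i hi
      rcases Nat.lt_succ_iff_lt_or_eq.mp hi with h | h
      · exact lt_trans (ih (by omega) i h) (htlt j (by omega))
      · subst h; exact htlt i (by omega)
  -- one-step growth bound
  have hstep1 : ∀ s, s < T →
      ‖x (s+1)‖ ≤ Lf * ((1+Lπ) * ‖x s‖ + (pibar0 + wmax)) := by
    intro s hsT
    have hfb := hf (x s) (π s (x s)) (w s) 0 0 0
    simp only [hf0, sub_zero] at hfb
    have hπb : ‖π s (x s)‖ ≤ Lπ * ‖x s‖ + pibar0 := by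
      have h1 := norm_add_le (π s (x s) - π s 0) (π s 0)
      rw [sub_add_cancel] at h1
      have h2 := hπ s (x s) 0
      rw [sub_zero] at h2
      linarith [hπ0 s]
    have h3 : ‖x s‖ + ‖π s (x s)‖ + ‖w s‖ ≤ (1+Lπ)*‖x s‖ + (pibar0 + wmax) := by
      linarith [hwb s]
    rw [hdyn s hsT]
    calc ‖f (x s) (π s (x s)) (w s)‖ ≤ Lf * (‖x s‖ + ‖π s (x s)‖ + ‖w s‖) := hfb
      _ ≤ Lf * ((1+Lπ)*‖x s‖ + (pibar0 + wmax)) :=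
          mul_le_mul_of_nonneg_left h3 (by linarith)
  -- uniform episode bound (including start point)
  have hEp' : ∀ j, j < J → ∀ s, t j ≤ s → s + 1 ≤ t (j+1) →
      ‖x s‖ ≤ κ * ρ^(s - t j) * ‖x (t j)‖ + c := by
    intro j hj s hs hs1
    rcases lt_or_eq_of_le hs with h | h
    · exact hEp j hj s h hs1
    · rw [← h]
      simp only [Nat.sub_self, pow_zero, mul_one]
      nlinarith [norm_nonneg (x (t j))]
  -- chain step hypothesis
  have hchain : ∀ k, k < J - 1 →
      if (fun k => decide (k ∈ B)) k then ‖x (t (k+1))‖ ≤ γ * ‖x (t k)‖ + e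
      else ‖x (t (k+1))‖ ≤ (1/2) * ‖x (t k)‖ + c := by
    intro k hk
    by_cases hkB : k ∈ B
    · simp only [hkB, decide_true, if_true]
      have htk : t k < t (k+1) := htlt k (by omega)
      have huT : t (k+1) ≤ T := by
        have := hlt J le_rfl (k+1) (by omega)
        omega
      set s := t (k+1) - 1 with hsdef
      have hs1 : s + 1 = t (k+1) := by omega
      have hsT : s < T := by omega
      have hxs : ‖x s‖ ≤ κ * ‖x (t k)‖ + c := by
        rcases lt_or_eq_of_le (show t k ≤ s by omega) with h | h
        · have hb := hEp k (by omega) s h (by omega)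
          have hp1 : ρ^(s - t k) ≤ 1 := pow_le_one₀ (le_of_lt hρ0) (le_of_lt hρ1)
          nlinarith [mul_nonneg (mul_nonneg (le_of_lt hκ0)
            (by linarith : (0:ℝ) ≤ 1 - ρ^(s - t k))) (norm_nonneg (x (t k)))]
        · rw [← h]
          nlinarith [norm_nonneg (x (t k))]
      have hd := hstep1 s hsT
      rw [hs1] at hd
      have h4 : Lf * ((1+Lπ) * ‖x s‖ + (pibar0 + wmax))
          ≤ Lf * ((1+Lπ) * (κ * ‖x (t k)‖ + c) + (pibar0 + wmax)) := by
        apply mul_le_mul_of_nonneg_left _ (by linarith)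
        nlinarith
      have h5 : Lf * (1+Lπ) ≤ γ := by nlinarith
      have h6 : Lf ≤ γ := by nlinarith
      have h7 : Lf * (1+Lπ) * c ≤ γ * c := mul_le_mul_of_nonneg_right h5 hc
      have h8 : Lf * pibar0 ≤ γ * pibar0 := mul_le_mul_of_nonneg_right h6 hpi0
      have h9 : Lf * wmax ≤ γ * c := by nlinarith
      calc ‖x (t (k+1))‖ ≤ Lf * ((1+Lπ) * (κ * ‖x (t k)‖ + c) + (pibar0 + wmax)) :=
            le_trans hd h4
        _ = Lf * (1+Lπ) * κ * ‖x (t k)‖ + Lf*(1+Lπ)*c + Lf*pibar0 + Lf*wmax := by ring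
        _ ≤ γ * ‖x (t k)‖ + γ*c + γ*pibar0 + γ*c := by
            rw [← hγ]; linarith
        _ = γ * ‖x (t k)‖ + e := by rw [hedef]; ring
    · simp only [hkB, decide_false, Bool.false_eq_true, if_false]
      have hb := (hGood k (by omega) hkB).2
      have h1 : κ * ρ^τ * ‖x (t k)‖ ≤ (1/2) * ‖x (t k)‖ :=
        mul_le_mul_of_nonneg_right hκρτ (norm_nonneg _)
      linarith
  -- apply the chain lemma
  have hM : fgEpB (fun k => decide (k ∈ B)) (J-1) ≤ 𝕄 :=
    le_trans (fgEpB_le_card B (J-1)) hBcard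
  have hSA := fg_chain_sum γ c e (fun k => decide (k ∈ B)) (fun j => ‖x (t j)‖)
    (J-1) 𝕄 hγ2 hc he (fun k => norm_nonneg _) hchain hM
  have hJ1 : J - 1 + 1 = J := by omega
  beta_reduce at hSA
  rw [hJ1] at hSA
  have hJcast : ((J-1 : ℕ) : ℝ) + 1 = (J : ℝ) := by
    have : ((J-1 : ℕ) : ℝ) = (J:ℝ) - 1 := by
      push_cast [Nat.cast_sub hJ]; ring
    rw [this]; ring
  rw [hJcast] at hSA
  rw [ht0] at hSA
  -- per-episode sums
  have hpp : ∀ i : ℕ, ((ρ:ℝ)^i)^2 = (ρ^2)^i := fun i => by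
    rw [← pow_mul, ← pow_mul, mul_comm]
  have hep : ∀ j, j < J → ∑ s ∈ Finset.Ico (t j) (t (j+1)), ‖x s‖^2
      ≤ 2*κ^2*(1-ρ^2)⁻¹*‖x (t j)‖^2 + 2*c^2*(((t (j+1)):ℝ) - (t j : ℝ)) := by
    intro j hj
    have hmj : t j ≤ t (j+1) := le_of_lt (htlt j hj)
    rw [Finset.sum_Ico_eq_sum_range]
    have hterm : ∀ i ∈ Finset.range (t (j+1) - t j),
        ‖x (t j + i)‖^2 ≤ 2*κ^2*‖x (t j)‖^2 * (ρ^2)^i + 2*c^2 := by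
      intro i hi
      have hi' := Finset.mem_range.mp hi
      have hb := hEp' j hj (t j + i) (Nat.le_add_right _ _) (by omega)
      rw [Nat.add_sub_cancel_left] at hb
      have h0 : (0:ℝ) ≤ κ * ρ^i * ‖x (t j)‖ := by positivity
      have h1 : ‖x (t j + i)‖^2 ≤ (κ * ρ^i * ‖x (t j)‖ + c)^2 := by
        apply sq_le_sq' _ hb
        nlinarith [norm_nonneg (x (t j + i))]
      calc ‖x (t j + i)‖^2 ≤ (κ * ρ^i * ‖x (t j)‖ + c)^2 := h1
        _ ≤ 2*(κ * ρ^i * ‖x (t j)‖)^2 + 2*c^2 := by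
            nlinarith [sq_nonneg (κ * ρ^i * ‖x (t j)‖ - c)]
        _ = 2*κ^2*‖x (t j)‖^2 * (ρ^2)^i + 2*c^2 := by
            rw [← hpp]; ring
    calc ∑ i ∈ Finset.range (t (j+1) - t j), ‖x (t j + i)‖^2
        ≤ ∑ i ∈ Finset.range (t (j+1) - t j),
            (2*κ^2*‖x (t j)‖^2 * (ρ^2)^i + 2*c^2) := Finset.sum_le_sum hterm
      _ = 2*κ^2*‖x (t j)‖^2 * (∑ i ∈ Finset.range (t (j+1) - t j), (ρ^2)^i)
            + 2*c^2 * ((t (j+1) - t j : ℕ) : ℝ) := by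
          rw [Finset.sum_add_distrib, Finset.sum_const, Finset.card_range, ← Finset.mul_sum]
          rw [nsmul_eq_mul]; ring
      _ ≤ 2*κ^2*‖x (t j)‖^2 * (1/(1-ρ^2)) + 2*c^2 * ((t (j+1) - t j : ℕ) : ℝ) := by
          have hg := fg_geom (ρ^2) (by positivity) (by nlinarith) (t (j+1) - t j)
          have h2 : (0:ℝ) ≤ 2*κ^2*‖x (t j)‖^2 := by positivity
          have h3 := mul_le_mul_of_nonneg_left hg h2
          linarith
      _ = 2*κ^2*(1-ρ^2)⁻¹*‖x (t j)‖^2 + 2*c^2*(((t (j+1)):ℝ) - (t j : ℝ)) := by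
          rw [Nat.cast_sub hmj, one_div]; ring
  -- partition of the total sum
  have hpart := fg_partition (fun s => ‖x s‖^2) t J (fun j hj => le_of_lt (htlt j hj))
  have hIco : Finset.range (T+1) = Finset.Ico (t 0) (t J) := by
    rw [ht0, htJ, Finset.range_eq_Ico]
  have htot : ∑ s ∈ Finset.range (T + 1), ‖x s‖ ^ 2
      = ∑ j ∈ Finset.range J, ∑ s ∈ Finset.Ico (t j) (t (j+1)), ‖x s‖^2 := by
    rw [hIco, ← hpart]
  -- total bound
  have hsumlen : ∑ j ∈ Finset.range J, (((t (j+1)):ℝ) - (t j : ℝ)) = (T:ℝ) + 1 := by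
    rw [Finset.sum_range_sub (fun j => ((t j : ℕ) : ℝ))]
    rw [ht0, htJ]; push_cast; ring
  have hstepA : ∑ s ∈ Finset.range (T + 1), ‖x s‖ ^ 2
      ≤ 2*κ^2*(1-ρ^2)⁻¹ * (∑ j ∈ Finset.range J, ‖x (t j)‖^2) + 2*c^2*((T:ℝ)+1) := by
    rw [htot]
    calc ∑ j ∈ Finset.range J, ∑ s ∈ Finset.Ico (t j) (t (j+1)), ‖x s‖^2
        ≤ ∑ j ∈ Finset.range J,
            (2*κ^2*(1-ρ^2)⁻¹*‖x (t j)‖^2 + 2*c^2*(((t (j+1)):ℝ) - (t j : ℝ))) :=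
          Finset.sum_le_sum (fun j hj => hep j (Finset.mem_range.mp hj))
      _ = 2*κ^2*(1-ρ^2)⁻¹ * (∑ j ∈ Finset.range J, ‖x (t j)‖^2)
            + 2*c^2*((T:ℝ)+1) := by
          rw [Finset.sum_add_distrib, ← Finset.mul_sum, ← Finset.mul_sum, hsumlen]
  -- final assembly
  set G := γ^(2*𝕄) with hGdef
  have hG1 : (1:ℝ) ≤ G := by rw [hGdef]; exact one_le_pow₀ (by linarith)
  have hG0 : (0:ℝ) ≤ G := by linarith
  clear_value G
  set X := ‖x 0‖ with hXdef
  have hX0 : (0:ℝ) ≤ X := by rw [hXdef]; exact norm_nonneg _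
  clear_value X
  have hRm : (X + (2*c+e)*2)^2
      ≤ 3*X^2 + (48+96*γ^2)*c^2 + 24*γ^2*pibar0^2 := by
    rw [hedef]
    exact fg_Rm_bound X c pibar0 γ hX0 hc hpi0 hγ0
  set P := κ^2*(1-ρ^2)⁻¹ with hPdef
  have hP0 : (0:ℝ) < P := by rw [hPdef]; positivity
  clear_value P
  have hSA2 : ∑ j ∈ Finset.range J, ‖x (t j)‖^2
      ≤ 32/9 * G * (3*X^2 + (48+96*γ^2)*c^2 + 24*γ^2*pibar0^2) + 8*c^2*(J:ℝ) := by
    have := mul_le_mul_of_nonneg_left hRm (by positivity : (0:ℝ) ≤ 32/9 * G)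
    linarith [hSA]
  have hfinal : ∑ s ∈ Finset.range (T + 1), ‖x s‖ ^ 2
      ≤ 2*P * (32/9 * G * (3*X^2 + (48+96*γ^2)*c^2 + 24*γ^2*pibar0^2) + 8*c^2*(J:ℝ))
        + 2*c^2*((T:ℝ)+1) := by
    have := mul_le_mul_of_nonneg_left hSA2 (by positivity : (0:ℝ) ≤ 2*P)
    calc ∑ s ∈ Finset.range (T + 1), ‖x s‖ ^ 2
        ≤ 2*κ^2*(1-ρ^2)⁻¹ * (∑ j ∈ Finset.range J, ‖x (t j)‖^2) + 2*c^2*((T:ℝ)+1) := hstepA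
      _ = 2*P * (∑ j ∈ Finset.range J, ‖x (t j)‖^2) + 2*c^2*((T:ℝ)+1) := by
          rw [hPdef]; ring_nf
      _ ≤ _ := by linarith
  have hJR : (1:ℝ) ≤ (J:ℝ) := by exact_mod_cast hJ
  have hc2 : (0:ℝ) ≤ c^2 := sq_nonneg c
  have hpi2 : (0:ℝ) ≤ pibar0^2 := sq_nonneg _
  have hX2 : (0:ℝ) ≤ X^2 := sq_nonneg _
  have hPG : (0:ℝ) ≤ P*G := by positivity
  calc ∑ s ∈ Finset.range (T + 1), ‖x s‖ ^ 2
      ≤ 2*P * (32/9 * G * (3*X^2 + (48+96*γ^2)*c^2 + 24*γ^2*pibar0^2) + 8*c^2*(J:ℝ))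
        + 2*c^2*((T:ℝ)+1) := hfinal
    _ ≤ 2*c^2*((T:ℝ) + (1+8*P)*(J:ℝ)) + 64/3*P*G*X^2
        + 64/9*P*(48+120*γ^2)*G*(c^2 + pibar0^2) :=
      fg_final P G c pibar0 X (T:ℝ) (J:ℝ) γ hP0 hG1 hJR hc hpi0 hX0 (Nat.cast_nonneg T)
    _ = 2 * β^2 * wmax^2 * ((T : ℝ) + (1 + 8*κ^2*(1-ρ^2)⁻¹) * (J : ℝ))
        + 64/3*κ^2*(1-ρ^2)⁻¹ * G * X^2
        + 64/9*κ^2*(1-ρ^2)⁻¹*(48+120*γ^2) * G * (β^2*wmax^2 + pibar0^2) := by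
      rw [hPdef, hcdef]; ring
end
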